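/- arXiv:1005.3721 — 4 statements merged into one kernel-verified Lean document; each statement's English description precedes it below -/
import Mathlib

section
/- Let J be the Jacobi matrix with diagonal entries 𝔠_j = 1 + 𝔡_j² and off-diagonal entries 𝔡_j, where 𝔡_j ∈ ℝ. If η ∈ ℓ² satisfies the formal equations 𝔡_{k-1} η_{k-1} + (1+𝔡_k²) η_k + 𝔡_k η_{k+1} = 0 for all k ≥ 0 (with 𝔡_{-1} = 0), then η = 0. Equivalently, ker J* = {0}. -/
open Complex

/-- The formal action of the Jacobi matrix `J` with diagonal `1 + 𝔡ⱼ²` and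
off-diagonal entries `𝔡ⱼ` on a sequence (with the convention `𝔡₋₁ = 0`). -/
def jacobiJ (d : ℕ → ℝ) (x : ℕ → ℂ) : ℕ → ℂ := fun k =>
  (match k with
    | 0 => 0
    | k + 1 => (d k : ℂ) * x k) + ((1 : ℂ) + (d k : ℂ) ^ 2) * x k + (d k : ℂ) * x (k + 1)

/-- if `η ∈ ℓ²` satisfies the formal equations
`𝔡_{k-1} η_{k-1} + (1+𝔡_k²) η_k + 𝔡_k η_{k+1} = 0` for all `k ≥ 0`
(i.e. `J*η = 0`), then `η = 0`; equivalently `ker J* = {0}`. -/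
theorem jacobiJ_adjoint_trivial_kernel
    (d : ℕ → ℝ) (η : ℕ → ℂ) (hη : Summable (fun k => ‖η k‖ ^ 2))
    (heq : ∀ k : ℕ, jacobiJ d η k = 0) :
    η = 0 := by
  have hn : ∀ z : ℂ, ‖z‖ ^ 2 = z.re ^ 2 + z.im ^ 2 := fun z => by
    rw [Complex.sq_norm, Complex.normSq_apply]; ring
  -- the quadratic-form identity: partial "inner products" ⟨η, Jη⟩ telescope
  have key : ∀ N : ℕ, ‖η 0‖^2 + ∑ n ∈ Finset.range N, ‖(d n : ℂ) * η n + η (n+1)‖^2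
      + ((d N)^2 * ‖η N‖^2 + d N * ((starRingEnd ℂ) (η N) * η (N+1)).re) = 0 := by
    intro N
    induction N with
    | zero =>
      have h := heq 0
      simp only [jacobiJ] at h
      rw [Complex.ext_iff] at h
      obtain ⟨hre, him⟩ := h
      simp only [hn, Finset.sum_range_zero, ← Complex.ofReal_pow, Complex.add_re, Complex.add_im,
        Complex.mul_re, Complex.mul_im, Complex.ofReal_re, Complex.ofReal_im, Complex.one_re,
        Complex.one_im, Complex.zero_re, Complex.zero_im, Complex.conj_re, Complex.conj_im]
        at hre him ⊢
      linear_combination (η 0).re * hre + (η 0).im * him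
    | succ N ih =>
      have h := heq (N+1)
      simp only [jacobiJ] at h
      rw [Complex.ext_iff] at h
      obtain ⟨hre, him⟩ := h
      rw [Finset.sum_range_succ]
      simp only [hn, ← Complex.ofReal_pow, Complex.add_re, Complex.add_im,
        Complex.mul_re, Complex.mul_im, Complex.ofReal_re, Complex.ofReal_im, Complex.one_re,
        Complex.one_im, Complex.zero_re, Complex.zero_im, Complex.conj_re, Complex.conj_im]
        at hre him ih ⊢
      linear_combination ih + (η (N+1)).re * hre + (η (N+1)).im * him
  set A : ℕ → ℝ := fun N => ‖η 0‖^2 + ∑ n ∈ Finset.range N, ‖(d n : ℂ) * η n + η (n+1)‖^2 with hA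
  have hAle : ∀ N, A N ≤ (1/4) * ‖η (N+1)‖^2 := by
    intro N
    have hb : 0 ≤ (d N)^2 * ‖η N‖^2 + d N * ((starRingEnd ℂ) (η N) * η (N+1)).re
        + (1/4) * ‖η (N+1)‖^2 := by
      simp only [hn, Complex.mul_re, Complex.conj_re, Complex.conj_im]
      nlinarith [sq_nonneg (d N * (η N).re + (η (N+1)).re / 2),
        sq_nonneg (d N * (η N).im + (η (N+1)).im / 2)]
    have h := key N
    simp only [hA]
    linarith
  have hmono : Monotone A := by
    intro N M hNM
    simp only [hA]
    have := Finset.sum_le_sum_of_subset_of_nonneg (Finset.range_subset_range.mpr hNM)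
      (fun i _ _ => sq_nonneg (‖(d i : ℂ) * η i + η (i+1)‖))
    linarith
  have htend : Filter.Tendsto (fun M => (1/4) * ‖η (M+1)‖^2) Filter.atTop (nhds 0) := by
    have h0 := hη.tendsto_atTop_zero
    have h1 : Filter.Tendsto (fun M : ℕ => ‖η (M+1)‖^2) Filter.atTop (nhds 0) :=
      h0.comp (Filter.tendsto_add_atTop_nat 1)
    simpa using h1.const_mul (1/4 : ℝ)
  have hA0 : ∀ N, A N ≤ 0 := by
    intro N
    refine ge_of_tendsto htend ?_
    filter_upwards [Filter.eventually_ge_atTop N] with M hM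
    exact (hmono hM).trans (hAle M)
  have hη0 : η 0 = 0 := by
    have h1 : ‖η 0‖^2 ≤ 0 := by
      have := hA0 0
      simpa [hA] using this
    have := sq_nonneg ‖η 0‖
    have : ‖η 0‖^2 = 0 := le_antisymm h1 this
    simpa [pow_eq_zero_iff] using this
  have hζ : ∀ n, (d n : ℂ) * η n + η (n+1) = 0 := by
    intro n
    have h1 : ‖(d n : ℂ) * η n + η (n+1)‖^2 ≤ 0 := by
      have h2 := hA0 (n+1)
      simp only [hA] at h2
      have h3 : ‖(d n : ℂ) * η n + η (n+1)‖^2 ≤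
          ∑ m ∈ Finset.range (n+1), ‖(d m : ℂ) * η m + η (m+1)‖^2 :=
        Finset.single_le_sum (f := fun m => ‖(d m : ℂ) * η m + η (m+1)‖^2)
          (fun i _ => sq_nonneg _) (Finset.self_mem_range_succ n)
      nlinarith [sq_nonneg ‖η 0‖]
    have : ‖(d n : ℂ) * η n + η (n+1)‖^2 = 0 := le_antisymm h1 (sq_nonneg _)
    simpa [pow_eq_zero_iff] using this
  funext n
  induction n with
  | zero => simpa using hη0
  | succ n ih =>
    have h := hζ n
    simp only [ih] at h
    simpa using h
end

section
/- For η ∈ ℓ²(ℕ) satisfying the tridiagonal relations 𝔡_{k-1} η_{k-1} + (1+𝔡_k²) η_k + 𝔡_k η_{k+1} = ζ_k with ζ ∈ ℓ² (i.e. J*η = ζ), one has the identity Σ_k ζ_k · conj(η_k) = |η_0|² + Σ_{n≥1} |𝔡_{n-1} η_{n-1} + η_n|². -/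
open Complex

private lemma normsq_ofReal (z : ℂ) : ((‖z‖^2 : ℝ) : ℂ) = z * (starRingEnd ℂ) z := by
  rw [Complex.mul_conj]; norm_cast; rw [Complex.normSq_eq_norm_sq]

/-- if `η, ζ ∈ ℓ²` and `J*η = ζ`, i.e.
`𝔡_{k-1} η_{k-1} + (1+𝔡_k²) η_k + 𝔡_k η_{k+1} = ζ_k` for all `k`, then
`∑ₖ ζₖ conj(ηₖ) = |η₀|² + ∑_{n≥1} |𝔡_{n-1} η_{n-1} + η_n|²`. -/
theorem jacobiJ_quadratic_identity
    (d : ℕ → ℝ) (η ζ : ℕ → ℂ)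
    (hη : Summable (fun k => ‖η k‖ ^ 2)) (hζ : Summable (fun k => ‖ζ k‖ ^ 2))
    (heq : ∀ k : ℕ, jacobiJ d η k = ζ k)
    (hs1 : Summable (fun k => ζ k * (starRingEnd ℂ) (η k)))
    (hs2 : Summable (fun n : ℕ => ‖(d n : ℂ) * η n + η (n + 1)‖ ^ 2)) :
    (∑' k : ℕ, ζ k * (starRingEnd ℂ) (η k)) =
      (‖η 0‖ ^ 2 : ℝ) + ((∑' n : ℕ, ‖(d n : ℂ) * η n + η (n + 1)‖ ^ 2 : ℝ) : ℂ) := by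
  classical
  -- the "b" sequence
  set b : ℕ → ℂ := fun n => Nat.rec (η 0) (fun k _ => (d k : ℂ) * η k + η (k + 1)) n with hb
  have hb0 : b 0 = η 0 := rfl
  have hbs : ∀ k, b (k + 1) = (d k : ℂ) * η k + η (k + 1) := fun k => rfl
  -- the telescoping sequence
  set g : ℕ → ℂ := fun n => Nat.rec (0 : ℂ)
    (fun k _ => (d k : ℂ) * (starRingEnd ℂ) (η k) * b (k + 1)) n with hg
  have hg0 : g 0 = 0 := rfl
  have hgs : ∀ k, g (k + 1) = (d k : ℂ) * (starRingEnd ℂ) (η k) * b (k + 1) := fun k => rfl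
  set F : ℕ → ℂ := fun k => ζ k * (starRingEnd ℂ) (η k) with hF
  set B : ℕ → ℂ := fun k => ((‖b k‖ ^ 2 : ℝ) : ℂ) with hB
  -- key termwise identity
  have key : ∀ k, F k - B k = g (k + 1) - g k := by
    intro k
    have hz := (heq k).symm
    cases k with
    | zero =>
        simp only [hF, hz, jacobiJ, hB, hb0, hg0, hgs, hbs, normsq_ofReal]
        ring
    | succ k =>
        simp only [hF, hz, jacobiJ, hB, hgs, hbs, normsq_ofReal, map_add, map_mul,
          Complex.conj_ofReal]
        ring
  -- summability of B
  have hBr : Summable (fun k => ‖b k‖ ^ 2) := by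
    rw [← summable_nat_add_iff 1]
    simpa only [hbs] using hs2
  have hBsum : Summable B := Complex.summable_ofReal.2 hBr
  -- partial sums of F - B telescope to g
  have htel : ∀ n, ∑ i ∈ Finset.range n, (F i - B i) = g n := by
    intro n
    calc ∑ i ∈ Finset.range n, (F i - B i) = ∑ i ∈ Finset.range n, (g (i + 1) - g i) := by
          exact Finset.sum_congr rfl fun i _ => key i
      _ = g n - g 0 := Finset.sum_range_sub g n
      _ = g n := by rw [hg0, sub_zero]
  -- g tends to tsum F - tsum B
  have hlim1 : Filter.Tendsto g Filter.atTop (nhds (∑' k, F k - ∑' k, B k)) := by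
    have := (hs1.hasSum.sub hBsum.hasSum).tendsto_sum_nat
    simpa only [htel] using this
  -- ‖b n‖ → 0 and ‖η n‖ → 0
  have hnorm0 : ∀ (f : ℕ → ℂ), Summable (fun k => ‖f k‖ ^ 2) →
      Filter.Tendsto (fun n => ‖f n‖) Filter.atTop (nhds 0) := by
    intro f hf
    have h1 := hf.tendsto_atTop_zero
    have h2 := (Real.continuous_sqrt.tendsto 0).comp h1
    have h3 : (fun n => ‖f n‖) = (Real.sqrt ∘ fun k => ‖f k‖ ^ 2) :=
      funext fun n => (Real.sqrt_sq (norm_nonneg _)).symm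
    rw [h3]
    simpa using h2
  have hbn := hnorm0 b hBr
  have hen := hnorm0 η hη
  -- g tends to 0
  have hlim2 : Filter.Tendsto g Filter.atTop (nhds 0) := by
    apply squeeze_zero_norm (a := fun n => (‖b n‖ + ‖η n‖) * ‖b n‖)
    · intro n
      cases n with
      | zero => simp [hg0]; positivity
      | succ k =>
          rw [hgs]
          have h1 : ‖(d k : ℂ) * (starRingEnd ℂ) (η k) * b (k + 1)‖
              = ‖(d k : ℂ) * η k‖ * ‖b (k + 1)‖ := by
            rw [norm_mul]; congr 1; rw [norm_mul, norm_mul, RCLike.norm_conj]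
          rw [h1]
          have h2 : ‖(d k : ℂ) * η k‖ ≤ ‖b (k + 1)‖ + ‖η (k + 1)‖ := by
            have : (d k : ℂ) * η k = b (k + 1) - η (k + 1) := by rw [hbs]; ring
            rw [this]
            exact norm_sub_le _ _
          exact mul_le_mul_of_nonneg_right h2 (norm_nonneg _)
    · have := ((hbn.add hen).mul hbn)
      simpa using this
  -- conclude tsum F = tsum B
  have heq2 : ∑' k, F k = ∑' k, B k := by
    have := tendsto_nhds_unique hlim1 hlim2
    linear_combination this
  have e1 : B 0 = ((‖η 0‖ ^ 2 : ℝ) : ℂ) := by simp only [hB, hb0]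
  have e2 : ∀ n, B (n + 1) = ((‖(d n : ℂ) * η n + η (n + 1)‖ ^ 2 : ℝ) : ℂ) :=
    fun n => by simp only [hB, hbs]
  rw [heq2, hBsum.tsum_eq_zero_add, e1, Complex.ofReal_tsum]
end

section
/- Let φ be in the class R₀, i.e. φ(λ) = ∫ dσ(t)/(t-λ) for a probability measure σ, and suppose all the interpolation data come from φ at distinct points z_0, …, z_n ∈ ℂ_+ via the modified Schur algorithm producing the continued-fraction convergent -Q_{n+1}/P_{n+1}. Then the rational function θ_n m_{[0,n]}, where m_{[0,n]}(λ) = -Q_{n+1}(λ)/P_{n+1}(λ) = ((H_{[0,n]} - λ J_{[0,n]})^{-1} e_0, e_0) and θ_n = det J_{[0,n]}/det J_{[1,n]} > 0, belongs to R₀: i.e. Im(θ_n m_{[0,n]}(λ))/Im λ > 0 for nonreal λ and sup_{y>0} |y · θ_n m_{[0,n]}(iy)| = 1. -/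
open Complex Matrix ComplexOrder

/-- The truncation `H_{[off, off+m-1]}` of the Hermitian tridiagonal matrix `H`
with diagonal entries `a⁽¹⁾ₗ` and off-diagonal entries `zₗ bₗ`, `conj(zₗ) bₗ`. -/
def npH (a1 b : ℕ → ℝ) (z : ℕ → ℂ) (off m : ℕ) : Matrix (Fin m) (Fin m) ℂ :=
  Matrix.of fun i k =>
    if (i : ℕ) = (k : ℕ) then (a1 (off + i) : ℂ)
    else if (i : ℕ) + 1 = (k : ℕ) then z (off + i) * (b (off + i) : ℂ)
    else if (k : ℕ) + 1 = (i : ℕ) then (starRingEnd ℂ) (z (off + k)) * (b (off + k) : ℂ)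
    else 0

/-- The truncation `J_{[off, off+m-1]}` of the positive definite real symmetric
tridiagonal matrix `J` with diagonal entries `a⁽²⁾ₗ = 1 + bₗ²` and off-diagonal `bₗ`. -/
def npJ (b : ℕ → ℝ) (off m : ℕ) : Matrix (Fin m) (Fin m) ℂ :=
  Matrix.of fun i k =>
    if (i : ℕ) = (k : ℕ) then (1 : ℂ) + (b (off + i) : ℂ) ^ 2
    else if (i : ℕ) + 1 = (k : ℕ) then (b (off + i) : ℂ)
    else if (k : ℕ) + 1 = (i : ℕ) then (b (off + k) : ℂ)
    else 0

namespace NP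

def matS (m : ℕ) : Matrix (Fin m) (Fin m) ℂ :=
  Matrix.of fun i k => if (i : ℕ) + 1 = (k : ℕ) then 1 else 0

def matD (b : ℕ → ℝ) (off m : ℕ) : Matrix (Fin m) (Fin m) ℂ :=
  Matrix.diagonal (fun i : Fin m => (b (off + (i:ℕ)) : ℂ)) + (matS m)ᴴ

lemma matS_conjTranspose_apply (m : ℕ) (i k : Fin m) :
    (matS m)ᴴ i k = if (k : ℕ) + 1 = (i : ℕ) then 1 else 0 := by
  simp only [matS, conjTranspose_apply, of_apply]
  split_ifs <;> simp

lemma ShS (m : ℕ) : (matS m)ᴴ * matS m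
    = Matrix.of (fun i k : Fin m => if (i : ℕ) = (k : ℕ) ∧ (i : ℕ) ≠ 0 then 1 else 0) := by
  ext i k
  rw [mul_apply]
  simp only [matS_conjTranspose_apply, matS, of_apply]
  rcases Nat.eq_zero_or_pos (i : ℕ) with hi | hi
  · rw [Finset.sum_eq_zero]
    · simp [hi]
    · intro j _
      split_ifs with h1 h2 <;> simp_all <;> omega
  · have hlt : (i : ℕ) - 1 < m := by omega
    rw [Finset.sum_eq_single ⟨(i : ℕ) - 1, hlt⟩]
    · have h1 : ((⟨(i : ℕ) - 1, hlt⟩ : Fin m) : ℕ) + 1 = (i : ℕ) := by simp; omega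
      simp only [h1, if_true]
      split_ifs <;> simp_all <;> omega
    · intro j _ hj
      have : ¬ ((j : ℕ) + 1 = (i : ℕ)) := by
        intro h
        apply hj
        apply Fin.ext
        simp
        omega
      simp [this]
    · simp

def matE (m : ℕ) : Matrix (Fin m) (Fin m) ℂ :=
  Matrix.of fun i k => if (i : ℕ) = 0 ∧ (k : ℕ) = 0 then 1 else 0
lemma matD_conjTranspose (b : ℕ → ℝ) (off m : ℕ) :
    (matD b off m)ᴴ = Matrix.diagonal (fun i : Fin m => (b (off + (i:ℕ)) : ℂ)) + matS m := by
  have hstar : (star fun i : Fin m => ((b (off + (i:ℕ)) : ℝ) : ℂ))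
      = fun i : Fin m => ((b (off + (i:ℕ)) : ℝ) : ℂ) := by
    funext i
    simp [Complex.conj_ofReal]
  rw [matD, conjTranspose_add, conjTranspose_conjTranspose, diagonal_conjTranspose, hstar]

lemma npJ_decomp (b : ℕ → ℝ) (off m : ℕ) :
    npJ b off m = matD b off m * (matD b off m)ᴴ + matE m := by
  rw [matD_conjTranspose, matD, add_mul, mul_add, mul_add, ShS, diagonal_mul_diagonal]
  ext i k
  have hS : ∀ i k : Fin m, matS m i k = if (i : ℕ) + 1 = (k : ℕ) then 1 else 0 := fun _ _ => rfl
  simp only [npJ, matE, of_apply, Matrix.add_apply, diagonal_apply, diagonal_mul, mul_diagonal,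
    matS_conjTranspose_apply, hS]
  by_cases h1 : (i : ℕ) = (k : ℕ)
  · have : i = k := Fin.ext h1
    subst this
    by_cases h0 : (i : ℕ) = 0 <;> simp [h0] <;> push_cast <;> ring
  · have hik : ¬ (i = k) := fun h => h1 (by rw [h])
    by_cases h2 : (i : ℕ) + 1 = (k : ℕ)
    · have h3 : ¬ ((k : ℕ) + 1 = (i : ℕ)) := by omega
      simp [h1, h2, h3, hik]
      omega
    · by_cases h3 : (k : ℕ) + 1 = (i : ℕ)
      · simp [h1, h2, h3, hik]
        omega
      · have h4 : ¬((i:ℕ) = 0 ∧ (k:ℕ) = 0) := by omega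
        simp [h1, h2, h3, hik, h4]

lemma matS_apply (m : ℕ) (i k : Fin m) :
    matS m i k = if (i : ℕ) + 1 = (k : ℕ) then 1 else 0 := rfl

lemma matE_isHermitian (m : ℕ) : (matE m).IsHermitian := by
  ext i k
  simp only [conjTranspose_apply, matE, of_apply]
  split_ifs with h1 h2 h2 <;> simp_all <;> tauto

lemma matD_det (b : ℕ → ℝ) (off m : ℕ) :
    (matD b off m).det = ∏ i : Fin m, (b (off + (i:ℕ)) : ℂ) := by
  have h : (matD b off m).BlockTriangular OrderDual.toDual := by
    intro i j hij
    have hij' : (i : ℕ) < (j : ℕ) := hij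
    have h1 : i ≠ j := by intro h; subst h; omega
    simp only [matD, Matrix.add_apply, diagonal_apply_ne _ h1, matS_conjTranspose_apply]
    have : ¬((j:ℕ) + 1 = (i:ℕ)) := by omega
    simp [this]
  rw [Matrix.det_of_lowerTriangular _ h]
  apply Finset.prod_congr rfl
  intro i _
  have : ¬ ((i:ℕ) + 1 = (i:ℕ)) := by omega
  simp [matD, Matrix.add_apply, diagonal_apply_eq, matS_conjTranspose_apply, matS_apply, this]
  

lemma matD_det_ne_zero (b : ℕ → ℝ) (hb : ∀ j, 0 < b j) (off m : ℕ) :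
    (matD b off m).det ≠ 0 := by
  rw [matD_det]
  apply Finset.prod_ne_zero_iff.2
  intro i _
  exact_mod_cast (hb (off + i)).ne'

lemma dot_star_self (m : ℕ) (v : Fin m → ℂ) :
    star v ⬝ᵥ v = ((∑ i, Complex.normSq (v i) : ℝ) : ℂ) := by
  simp only [dotProduct, Pi.star_apply]
  push_cast
  apply Finset.sum_congr rfl
  intro i _
  rw [Complex.star_def, mul_comm, Complex.mul_conj]

lemma matE_form (m : ℕ) (x : Fin m → ℂ) :
    star x ⬝ᵥ (matE m *ᵥ x)
      = ((Complex.normSq (∑ k : Fin m, if (k : ℕ) = 0 then x k else 0) : ℝ) : ℂ) := by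
  set s := ∑ k : Fin m, if (k : ℕ) = 0 then x k else 0 with hs
  have hEx : matE m *ᵥ x = fun i : Fin m => if (i : ℕ) = 0 then s else 0 := by
    funext i
    simp only [mulVec, dotProduct, matE, of_apply]
    by_cases hi : (i : ℕ) = 0
    · simp only [hi, true_and, hs]
      apply Finset.sum_congr rfl
      intro k _
      split_ifs <;> simp
    · simp [hi]
  rw [hEx]
  have hfac : (star x ⬝ᵥ fun i : Fin m => if (i : ℕ) = 0 then s else 0)
      = (∑ i : Fin m, if (i : ℕ) = 0 then star (x i) else 0) * s := by
    rw [Finset.sum_mul]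
    simp only [dotProduct, Pi.star_apply]
    apply Finset.sum_congr rfl
    intro i _
    split_ifs <;> simp
  rw [hfac]
  have hss : (∑ i : Fin m, if (i : ℕ) = 0 then star (x i) else 0) = star s := by
    rw [hs, star_sum]
    apply Finset.sum_congr rfl
    intro i _
    split_ifs <;> simp
  rw [hss, Complex.star_def, mul_comm, Complex.mul_conj]

lemma npJ_posdef (b : ℕ → ℝ) (hb : ∀ j, 0 < b j) (off m : ℕ) :
    (npJ b off m).PosDef := by
  rw [posDef_iff_dotProduct_mulVec]
  constructor
  · rw [npJ_decomp]
    exact (isHermitian_mul_conjTranspose_self _).add (matE_isHermitian m)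
  · intro x hx
    rw [npJ_decomp, add_mulVec, dotProduct_add]
    have h1 : star x ⬝ᵥ ((matD b off m * (matD b off m)ᴴ) *ᵥ x)
        = star ((matD b off m)ᴴ *ᵥ x) ⬝ᵥ ((matD b off m)ᴴ *ᵥ x) := by
      rw [← mulVec_mulVec, dotProduct_mulVec, star_mulVec, conjTranspose_conjTranspose]
    set y := (matD b off m)ᴴ *ᵥ x with hy
    have hyne : y ≠ 0 := by
      intro h0
      apply hx
      have hU : IsUnit ((matD b off m)ᴴ) := by
        rw [Matrix.isUnit_iff_isUnit_det, det_conjTranspose]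
        exact (matD_det_ne_zero b hb off m).isUnit.star
      have hinj := Matrix.mulVec_injective_iff_isUnit.2 hU
      apply hinj
      rw [← hy, h0, mulVec_zero]
    rw [h1, dot_star_self, matE_form]
    have hsum : 0 < ∑ i, Complex.normSq (y i) := by
      obtain ⟨i, hi⟩ := Function.ne_iff.1 hyne
      exact Finset.sum_pos' (fun j _ => Complex.normSq_nonneg _)
        ⟨i, Finset.mem_univ i, Complex.normSq_pos.2 hi⟩
    rw [← Complex.ofReal_add, Complex.zero_lt_real]
    have := Complex.normSq_nonneg (∑ k : Fin m, if (k : ℕ) = 0 then x k else 0)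
    linarith

lemma npH_isHermitian (a1 b : ℕ → ℝ) (z : ℕ → ℂ) (off m : ℕ) :
    (npH a1 b z off m).IsHermitian := by
  ext i k
  simp only [conjTranspose_apply, npH, of_apply]
  by_cases h1 : (i : ℕ) = (k : ℕ)
  · have : i = k := Fin.ext h1
    subst this
    simp [Complex.conj_ofReal]
  · have h1' : ¬ ((k : ℕ) = (i : ℕ)) := fun h => h1 h.symm
    by_cases h2 : (i : ℕ) + 1 = (k : ℕ)
    · have h3 : ¬ ((k : ℕ) + 1 = (i : ℕ)) := by omega
      simp [h1, h1', h2, h3, Complex.conj_ofReal]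
    · by_cases h3 : (k : ℕ) + 1 = (i : ℕ)
      · simp [h1, h1', h2, h3, Complex.conj_ofReal]
      · simp [h1, h1', h2, h3]

lemma herm_conj_form {m : ℕ} {A : Matrix (Fin m) (Fin m) ℂ} (hA : A.IsHermitian)
    (v : Fin m → ℂ) :
    starRingEnd ℂ (star v ⬝ᵥ (A *ᵥ v)) = star v ⬝ᵥ (A *ᵥ v) := by
  have h1 : starRingEnd ℂ (star v ⬝ᵥ (A *ᵥ v)) = star (A *ᵥ v) ⬝ᵥ v := by
    rw [star_dotProduct]
    simp
  rw [h1, star_mulVec, hA.eq, ← dotProduct_mulVec]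

lemma herm_form_im {m : ℕ} {A : Matrix (Fin m) (Fin m) ℂ} (hA : A.IsHermitian)
    (v : Fin m → ℂ) : (star v ⬝ᵥ (A *ᵥ v)).im = 0 :=
  Complex.conj_eq_iff_im.1 (herm_conj_form hA v)

lemma posdef_form {m : ℕ} {B : Matrix (Fin m) (Fin m) ℂ} (hB : B.PosDef)
    {v : Fin m → ℂ} (hv : v ≠ 0) :
    0 < (star v ⬝ᵥ (B *ᵥ v)).re ∧ (star v ⬝ᵥ (B *ᵥ v)).im = 0 := by
  have := hB.dotProduct_mulVec_pos hv
  rw [Complex.lt_def] at this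
  exact ⟨by simpa using this.1, by simpa using this.2.symm⟩

lemma det_unit {m : ℕ} {A B : Matrix (Fin m) (Fin m) ℂ} (hA : A.IsHermitian)
    (hB : B.PosDef) {lam : ℂ} (him : lam.im ≠ 0) : IsUnit (A - lam • B).det := by
  rw [isUnit_iff_ne_zero]
  intro h0
  obtain ⟨v, hv, hMv⟩ := (Matrix.exists_mulVec_eq_zero_iff).2 h0
  have hAv : A *ᵥ v = lam • (B *ᵥ v) := by
    have : A *ᵥ v - lam • (B *ᵥ v) = 0 := by
      rw [← smul_mulVec, ← sub_mulVec, hMv]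
    linear_combination (norm := module) this
  have heq : star v ⬝ᵥ (A *ᵥ v) = lam * (star v ⬝ᵥ (B *ᵥ v)) := by
    rw [hAv, dotProduct_smul, smul_eq_mul]
  have h1 := herm_form_im hA v
  have h2 := posdef_form hB hv
  rw [heq] at h1
  rw [Complex.mul_im, h2.2, mul_zero, zero_add] at h1
  exact him (by
    rcases mul_eq_zero.1 h1 with h | h
    · exact h
    · exact absurd h h2.1.ne')

lemma key_resolvent {m : ℕ} {A B : Matrix (Fin m) (Fin m) ℂ} {lam : ℂ}
    (hdet : IsUnit (A - lam • B).det) (i0 : Fin m) :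
    ∃ u : Fin m → ℂ, u ≠ 0 ∧
      (A - lam • B)⁻¹ i0 i0 = u i0 ∧
      starRingEnd ℂ (u i0)
        = star u ⬝ᵥ (A *ᵥ u) - lam * (star u ⬝ᵥ (B *ᵥ u)) := by
  set M := A - lam • B with hM
  set u := M⁻¹ *ᵥ Pi.single i0 1 with hu
  have hMu : M *ᵥ u = Pi.single i0 1 := by
    rw [hu, mulVec_mulVec, Matrix.mul_nonsing_inv _ hdet, one_mulVec]
  refine ⟨u, ?_, ?_, ?_⟩
  · intro h0
    have : (Pi.single i0 1 : Fin m → ℂ) = 0 := by rw [← hMu, h0, mulVec_zero]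
    have := congr_fun this i0
    simp at this
  · rw [hu, mulVec_single]
    simp
  · have h1 : starRingEnd ℂ (u i0) = star u ⬝ᵥ (M *ᵥ u) := by
      rw [hMu, dotProduct_single]
      simp
    rw [h1, hM, sub_mulVec, smul_mulVec, dotProduct_sub, dotProduct_smul, smul_eq_mul]

lemma dot_cs (N : ℕ) (a c : Fin N → ℂ) :
    norm (star a ⬝ᵥ c) ^ 2 ≤ (star a ⬝ᵥ a).re * (star c ⬝ᵥ c).re := by
  set a' : EuclideanSpace ℂ (Fin N) := WithLp.toLp 2 a
  set c' : EuclideanSpace ℂ (Fin N) := WithLp.toLp 2 c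
  have h1 : star a ⬝ᵥ c = (inner ℂ a' c' : ℂ) := by
    rw [EuclideanSpace.inner_toLp_toLp, dotProduct_comm]
  have h2 : (star a ⬝ᵥ a).re = ‖a'‖ ^ 2 := by
    rw [show star a ⬝ᵥ a = (inner ℂ a' a' : ℂ) by
      rw [EuclideanSpace.inner_toLp_toLp, dotProduct_comm]]
    simpa using inner_self_eq_norm_sq (𝕜 := ℂ) a'
  have h3 : (star c ⬝ᵥ c).re = ‖c'‖ ^ 2 := by
    rw [show star c ⬝ᵥ c = (inner ℂ c' c' : ℂ) by
      rw [EuclideanSpace.inner_toLp_toLp, dotProduct_comm]]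
    simpa using inner_self_eq_norm_sq (𝕜 := ℂ) c'
  rw [h1, h2, h3]
  have h4 : ‖(inner ℂ a' c' : ℂ)‖ ≤ ‖a'‖ * ‖c'‖ := norm_inner_le_norm a' c'
  have h5 : norm (inner ℂ a' c' : ℂ) = ‖(inner ℂ a' c' : ℂ)‖ := rfl
  rw [h5]
  calc ‖(inner ℂ a' c' : ℂ)‖ ^ 2 ≤ (‖a'‖ * ‖c'‖) ^ 2 := by
        apply pow_le_pow_left₀ (norm_nonneg _) h4
    _ = ‖a'‖ ^ 2 * ‖c'‖ ^ 2 := by ring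

lemma cs_form {m : ℕ} {B : Matrix (Fin m) (Fin m) ℂ} (hB : B.PosSemidef)
    (w u : Fin m → ℂ) :
    norm (star w ⬝ᵥ (B *ᵥ u)) ^ 2
      ≤ (star w ⬝ᵥ (B *ᵥ w)).re * (star u ⬝ᵥ (B *ᵥ u)).re := by
  obtain ⟨C, rfl⟩ : ∃ C : Matrix (Fin m) (Fin m) ℂ, B = Cᴴ * C := by
    open scoped MatrixOrder in
    obtain ⟨X, hX, -, hXB⟩ :=
      CFC.exists_sqrt_of_isSelfAdjoint_of_quasispectrumRestricts hB.isHermitian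
        (QuasispectrumRestricts.nnreal_of_nonneg hB.nonneg)
    exact ⟨X, by rw [← hXB, show Xᴴ = X from hX]⟩
  have key : ∀ x y : Fin m → ℂ, star x ⬝ᵥ ((Cᴴ * C) *ᵥ y) = star (C *ᵥ x) ⬝ᵥ (C *ᵥ y) := by
    intro x y
    rw [← mulVec_mulVec, dotProduct_mulVec, star_mulVec]
  rw [key, key, key]
  exact dot_cs m (C *ᵥ w) (C *ᵥ u)

lemma smul_inv {m : ℕ} {M : Matrix (Fin m) (Fin m) ℂ} (hdet : IsUnit M.det)
    {c : ℂ} (hc : c ≠ 0) : (c • M)⁻¹ = c⁻¹ • M⁻¹ := by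
  apply Matrix.inv_eq_right_inv
  rw [smul_mul_assoc, mul_smul_comm, smul_smul, mul_inv_cancel₀ hc,
    Matrix.mul_nonsing_inv _ hdet, one_smul]

lemma npJ_submatrix (b : ℕ → ℝ) (n : ℕ) :
    (npJ b 0 (n+1)).submatrix Fin.succ Fin.succ = npJ b 1 n := by
  ext i k
  simp only [submatrix_apply, npJ, of_apply, Fin.val_succ]
  have e1 : ((i : ℕ) + 1 = (k : ℕ) + 1) ↔ ((i : ℕ) = (k : ℕ)) := by omega
  have e2 : (0 + ((i : ℕ) + 1)) = 1 + (i : ℕ) := by omega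
  have e3 : (0 + ((k : ℕ) + 1)) = 1 + (k : ℕ) := by omega
  split_ifs <;> simp_all <;> omega

lemma npJ_inv00 (b : ℕ → ℝ) (n : ℕ) (hdet : IsUnit (npJ b 0 (n+1)).det) :
    (npJ b 0 (n+1))⁻¹ 0 0 * (npJ b 0 (n+1)).det = (npJ b 1 n).det := by
  rw [Matrix.inv_def, Matrix.smul_apply, Ring.inverse_eq_inv']
  rw [Matrix.adjugate_fin_succ_eq_det_submatrix, Fin.succAbove_zero, npJ_submatrix]
  have h0 : (npJ b 0 (n+1)).det ≠ 0 := by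
    intro h; rw [h] at hdet; simpa using hdet
  simp only [smul_eq_mul]
  field_simp
  simp

lemma det_real_pos {m : ℕ} {B : Matrix (Fin m) (Fin m) ℂ} (hB : B.PosDef) :
    B.det = ((B.det.re : ℝ) : ℂ) ∧ 0 < B.det.re := by
  have h := hB.det_pos
  rw [Complex.lt_def] at h
  refine ⟨?_, by simpa using h.1⟩
  apply Complex.ext
  · simp
  · simpa using h.2.symm

/-- The key quantitative bound: `y * |m(iy)| ≤ (J⁻¹)₀₀`. -/
lemma bound_aux {n : ℕ} (a1 b : ℕ → ℝ) (hb : ∀ j, 0 < b j) (z : ℕ → ℂ)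
    {y : ℝ} (hy : 0 < y) :
    y * norm ((npH a1 b z 0 (n+1) - (((y:ℝ):ℂ) * Complex.I) • npJ b 0 (n+1))⁻¹ 0 0)
      ≤ (npJ b 1 n).det.re / (npJ b 0 (n+1)).det.re := by
  set Hm := npH a1 b z 0 (n+1) with hHm
  set Jm := npJ b 0 (n+1) with hJm
  have hJpd : Jm.PosDef := npJ_posdef b hb 0 (n+1)
  have hHherm : Hm.IsHermitian := npH_isHermitian a1 b z 0 (n+1)
  set lam : ℂ := ((y:ℝ):ℂ) * Complex.I with hlam
  have hlam_im : lam.im = y := by simp [hlam]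
  have hdet : IsUnit (Hm - lam • Jm).det :=
    det_unit hHherm hJpd (by rw [hlam_im]; exact hy.ne')
  obtain ⟨u, hu0, hval, hconj⟩ := key_resolvent hdet (0 : Fin (n+1))
  have hj := posdef_form hJpd hu0
  have hh := herm_form_im hHherm u
  -- imaginary part of u 0
  have him : (u 0).im = y * (star u ⬝ᵥ (Jm *ᵥ u)).re := by
    have h1 := congrArg Complex.im hconj
    simp only [Complex.conj_im, Complex.sub_im, Complex.mul_im, hh, hj.2, hlam_im] at h1
    simp only [hlam, Complex.mul_re, Complex.mul_im, Complex.I_re, Complex.I_im,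
      Complex.ofReal_re, Complex.ofReal_im] at h1
    linarith
  -- the vector w
  have hJdet := det_real_pos hJpd
  have hJdet1 := det_real_pos (npJ_posdef b hb 1 n)
  have hJdu : IsUnit Jm.det := by
    rw [isUnit_iff_ne_zero, hJdet.1]
    exact_mod_cast hJdet.2.ne'
  set w : Fin (n+1) → ℂ := Jm⁻¹ *ᵥ Pi.single 0 1 with hw
  have hJw : Jm *ᵥ w = Pi.single 0 1 := by
    rw [hw, mulVec_mulVec, Matrix.mul_nonsing_inv _ hJdu, one_mulVec]
  have hstar_single : star (Pi.single (0 : Fin (n+1)) (1:ℂ) : Fin (n+1) → ℂ) = Pi.single 0 1 := by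
    funext i
    rcases eq_or_ne i 0 with h | h
    · subst h; simp
    · simp [h]
  have hwu : star w ⬝ᵥ (Jm *ᵥ u) = u 0 := by
    rw [dotProduct_mulVec, ← conjTranspose_conjTranspose Jm, ← star_mulVec,
      hJpd.1.eq, hJw, hstar_single, single_dotProduct, one_mul]
  have hww : star w ⬝ᵥ (Jm *ᵥ w) = starRingEnd ℂ (w 0) := by
    rw [hJw, dotProduct_single]
    simp [Complex.star_def]
  have hw0 : w 0 = ((npJ b 1 n).det.re / Jm.det.re : ℝ) := by
    have h1 := npJ_inv00 b n hJdu
    have hw0' : w 0 = Jm⁻¹ 0 0 := by rw [hw, mulVec_single]; simp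
    rw [hw0', ← hJm] at *
    have hne : Jm.det ≠ 0 := by
      rw [hJdet.1]; exact_mod_cast hJdet.2.ne'
    have : Jm⁻¹ 0 0 = (npJ b 1 n).det / Jm.det := by
      field_simp at h1 ⊢
      linear_combination h1
    rw [this, hJdet.1, hJdet1.1]
    push_cast
    rfl
  -- Cauchy-Schwarz
  have hcs := cs_form hJpd.posSemidef w u
  rw [hwu] at hcs
  set c : ℝ := (npJ b 1 n).det.re / Jm.det.re with hc
  have hcpos : 0 < c := div_pos hJdet1.2 hJdet.2
  have hwwre : (star w ⬝ᵥ (Jm *ᵥ w)).re = c := by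
    rw [hww, hw0]
    simp [Complex.conj_ofReal]
  rw [hwwre] at hcs
  -- combine
  set α : ℝ := norm (u 0) with hα
  set β : ℝ := (star u ⬝ᵥ (Jm *ᵥ u)).re with hβ
  have hβpos : 0 < β := hj.1
  have him' : y * β ≤ α := by
    have h2 : (u 0).im ≤ norm (u 0) := (le_abs_self _).trans (Complex.abs_im_le_norm _)
    rw [him] at h2
    exact h2
  have hαnn : 0 ≤ α := norm_nonneg _
  rw [hval]
  have : y * α ≤ c := by
    rcases eq_or_lt_of_le hαnn with h | h
    · rw [← h, mul_zero]; exact hcpos.le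
    · nlinarith [hcs, him', mul_pos hy h]
  exact this

lemma scale_id {n : ℕ} (a1 b : ℕ → ℝ) (hb : ∀ j, 0 < b j) (z : ℕ → ℂ)
    {y : ℝ} (hy : 0 < y) :
    ((y:ℝ):ℂ) * ((npH a1 b z 0 (n+1) - (((y:ℝ):ℂ) * Complex.I) • npJ b 0 (n+1))⁻¹ 0 0)
      = (((1/y : ℝ):ℂ) • npH a1 b z 0 (n+1) - Complex.I • npJ b 0 (n+1))⁻¹ 0 0 := by
  set Hm := npH a1 b z 0 (n+1)
  set Jm := npJ b 0 (n+1)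
  have hJpd : Jm.PosDef := npJ_posdef b hb 0 (n+1)
  have hHherm : Hm.IsHermitian := npH_isHermitian a1 b z 0 (n+1)
  set lam : ℂ := ((y:ℝ):ℂ) * Complex.I with hlam
  have hdet : IsUnit (Hm - lam • Jm).det := by
    apply det_unit hHherm hJpd
    simp [hlam]
    exact hy.ne'
  set A := ((1/y : ℝ):ℂ) • Hm - Complex.I • Jm with hA
  have hyC : ((y:ℝ):ℂ) ≠ 0 := by exact_mod_cast hy.ne'
  have hcoef : ((y:ℝ):ℂ) * ((1/y : ℝ):ℂ) = 1 := by
    push_cast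
    field_simp
  have hMA : Hm - lam • Jm = ((y:ℝ):ℂ) • A := by
    rw [hA, smul_sub, smul_smul, smul_smul, hcoef, one_smul, hlam]
  have hAdet : IsUnit A.det := by
    have h1 : (Hm - lam • Jm).det = ((y:ℝ):ℂ)^(n+1) * A.det := by
      rw [hMA, det_smul]
      simp
    rw [isUnit_iff_ne_zero] at hdet ⊢
    intro h0
    rw [h1, h0, mul_zero] at hdet
    exact hdet rfl
  rw [hMA, smul_inv hAdet hyC, Matrix.smul_apply, smul_eq_mul, ← mul_assoc,
    mul_inv_cancel₀ hyC, one_mul]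

end NP

/-- the normalized m-function `θₙ m_{[0,n]}`, where
`m_{[0,n]}(λ) = ((H_{[0,n]} - λ J_{[0,n]})⁻¹ e₀, e₀)` and
`θₙ = det J_{[0,n]} / det J_{[1,n]} > 0`, belongs to the class `R₀`:
`Im(θₙ m_{[0,n]}(λ))/Im λ > 0` off the real axis and `sup_{y>0} |y θₙ m_{[0,n]}(iy)| = 1`. -/
theorem normalized_m_function_in_R0
    (a1 b : ℕ → ℝ) (hb : ∀ j, 0 < b j)
    (z : ℕ → ℂ) (hz : ∀ j, 0 < (z j).im) (n : ℕ)
    (theta : ℂ) (htheta : theta = (npJ b 0 (n + 1)).det / (npJ b 1 n).det)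
    (Φ : ℂ → ℂ)
    (hΦ : ∀ lam : ℂ, Φ lam = theta * ((npH a1 b z 0 (n + 1) - lam • npJ b 0 (n + 1))⁻¹ 0 0)) :
    (∀ lam : ℂ, lam.im ≠ 0 → 0 < (Φ lam).im / lam.im) ∧
    (⨆ y : {y : ℝ // 0 < y}, ‖((y.1 : ℂ)) * Φ ((y.1 : ℝ) * Complex.I)‖) = 1 := by
  classical
  set Hm := npH a1 b z 0 (n+1) with hHm
  set Jm := npJ b 0 (n+1) with hJm
  have hJpd : Jm.PosDef := NP.npJ_posdef b hb 0 (n+1)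
  have hJ1pd : (npJ b 1 n).PosDef := NP.npJ_posdef b hb 1 n
  have hHherm : Hm.IsHermitian := NP.npH_isHermitian a1 b z 0 (n+1)
  have hJdet := NP.det_real_pos hJpd
  have hJdet1 := NP.det_real_pos hJ1pd
  set r0 : ℝ := Jm.det.re with hr0
  set r1 : ℝ := (npJ b 1 n).det.re with hr1
  have hJdu : IsUnit Jm.det := by
    rw [isUnit_iff_ne_zero, hJdet.1]
    exact_mod_cast hJdet.2.ne'
  have htheta' : theta = ((r0 / r1 : ℝ) : ℂ) := by
    rw [htheta, hJdet.1, hJdet1.1, ← Complex.ofReal_div]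
  have hrt : 0 < r0 / r1 := div_pos hJdet.2 hJdet1.2
  constructor
  · -- Herglotz property
    intro lam hlam
    have hdet : IsUnit (Hm - lam • Jm).det := NP.det_unit hHherm hJpd hlam
    obtain ⟨u, hu0, hval, hconj⟩ := NP.key_resolvent hdet (0 : Fin (n+1))
    have hj := NP.posdef_form hJpd hu0
    have hh := NP.herm_form_im hHherm u
    have him : (u 0).im = lam.im * (star u ⬝ᵥ (Jm *ᵥ u)).re := by
      have h1 := congrArg Complex.im hconj
      simp only [Complex.conj_im, Complex.sub_im, Complex.mul_im, hh, hj.2,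
        mul_zero, add_zero, zero_sub] at h1
      linarith
    have hΦim : (Φ lam).im = (r0 / r1) * (lam.im * (star u ⬝ᵥ (Jm *ᵥ u)).re) := by
      rw [hΦ lam, hval, htheta', ← him]
      simp [Complex.mul_im]
    rw [hΦim]
    have : (r0 / r1) * (lam.im * (star u ⬝ᵥ (Jm *ᵥ u)).re) / lam.im
        = (r0 / r1) * (star u ⬝ᵥ (Jm *ᵥ u)).re := by
      rw [mul_div_assoc, mul_div_cancel_left₀ _ hlam]
    rw [this]
    exact mul_pos hrt hj.1
  · -- sup equals 1
    haveI : Nonempty {y : ℝ // 0 < y} := ⟨⟨1, one_pos⟩⟩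
    have hbound : ∀ y : ℝ, 0 < y → ‖((y : ℝ):ℂ) * Φ ((y:ℝ) * Complex.I)‖ ≤ 1 := by
      intro y hy
      rw [hΦ, htheta']
      have hswap : ((y:ℝ):ℂ) * (((r0 / r1 : ℝ):ℂ) * ((Hm - (((y:ℝ):ℂ) * Complex.I) • Jm)⁻¹ 0 0))
          = ((r0 / r1 : ℝ):ℂ) * (((y:ℝ):ℂ) * ((Hm - (((y:ℝ):ℂ) * Complex.I) • Jm)⁻¹ 0 0)) := by
        ring
      rw [hswap, norm_mul, norm_mul]
      have h1 : ‖((r0 / r1 : ℝ):ℂ)‖ = r0 / r1 := by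
        rw [Complex.norm_real, Real.norm_eq_abs, abs_of_pos hrt]
      have h2 : ‖((y:ℝ):ℂ)‖ = y := by
        rw [Complex.norm_real, Real.norm_eq_abs, abs_of_pos hy]
      rw [h1, h2]
      have h3 := NP.bound_aux a1 b hb z hy (n := n)
      rw [← hHm, ← hJm, ← hr0, ← hr1] at h3
      have h4 : ‖(Hm - (((y:ℝ):ℂ) * Complex.I) • Jm)⁻¹ 0 0‖
          = norm ((Hm - (((y:ℝ):ℂ) * Complex.I) • Jm)⁻¹ 0 0) := rfl
      rw [h4]
      calc r0 / r1 * (y * norm ((Hm - (((y:ℝ):ℂ) * Complex.I) • Jm)⁻¹ 0 0))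
          ≤ r0 / r1 * (r1 / r0) := by
            apply mul_le_mul_of_nonneg_left h3 hrt.le
        _ = 1 := by
            rw [div_mul_div_comm, mul_comm r0 r1, div_self (mul_pos hJdet1.2 hJdet.2).ne']
    -- the limit function
    set g : ℝ → ℂ := fun t => (((t:ℝ):ℂ) • Hm - Complex.I • Jm)⁻¹ 0 0 with hg
    have hA0 : ((0:ℝ):ℂ) • Hm - Complex.I • Jm = (-Complex.I) • Jm := by
      simp [neg_smul]
    have hdet0 : (((0:ℝ):ℂ) • Hm - Complex.I • Jm).det ≠ 0 := by
      rw [hA0, det_smul]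
      simp only [Fintype.card_fin]
      apply mul_ne_zero
      · apply pow_ne_zero
        simp [Complex.I_ne_zero]
      · rw [hJdet.1]
        exact_mod_cast hJdet.2.ne'
    have hAc : Continuous (fun t : ℝ => ((t:ℝ):ℂ) • Hm - Complex.I • Jm) :=
      (Complex.continuous_ofReal.smul continuous_const).sub continuous_const
    have hgc : ContinuousAt g 0 := by
      have hinv : ContinuousAt Inv.inv (((0:ℝ):ℂ) • Hm - Complex.I • Jm) := by
        apply continuousAt_matrix_inv
        rw [Ring.inverse_eq_inv']
        exact continuousAt_inv₀ hdet0
      have hev : Continuous (fun M : Matrix (Fin (n+1)) (Fin (n+1)) ℂ => M 0 0) :=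
        (continuous_apply (0 : Fin (n+1))).comp (continuous_apply (0 : Fin (n+1)))
      have h2 : ContinuousAt (fun t : ℝ => (((t:ℝ):ℂ) • Hm - Complex.I • Jm)⁻¹) 0 := by
        apply ContinuousAt.comp (x := (0:ℝ)) ?_ hAc.continuousAt
        exact hinv
      exact hev.continuousAt.comp h2
    have hg0 : g 0 = Complex.I * ((r1 / r0 : ℝ) : ℂ) := by
      rw [hg]
      simp only []
      rw [hA0, NP.smul_inv hJdu (by simp [Complex.I_ne_zero] : (-Complex.I) ≠ 0),
        Matrix.smul_apply, smul_eq_mul]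
      have hIinv : (-Complex.I)⁻¹ = Complex.I := by
        rw [inv_neg, Complex.inv_I, neg_neg]
      rw [hIinv]
      congr 1
      have h1 := NP.npJ_inv00 b n hJdu
      rw [← hJm] at h1
      have hne : Jm.det ≠ 0 := by
        rw [hJdet.1]; exact_mod_cast hJdet.2.ne'
      have : Jm⁻¹ 0 0 = (npJ b 1 n).det / Jm.det := by
        field_simp at h1 ⊢
        linear_combination h1
      rw [this, hJdet.1, hJdet1.1, ← Complex.ofReal_div]
    have hval1 : theta * g 0 = Complex.I := by
      rw [hg0, htheta']
      rw [← mul_assoc, mul_comm (((r0/r1 : ℝ):ℂ)) Complex.I, mul_assoc,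
        ← Complex.ofReal_mul]
      have : r0 / r1 * (r1 / r0) = 1 := by
        rw [div_mul_div_comm, mul_comm r0 r1, div_self (mul_pos hJdet1.2 hJdet.2).ne']
      rw [this]
      simp
    have hid : ∀ y : ℝ, 0 < y → ((y : ℝ):ℂ) * Φ ((y:ℝ) * Complex.I) = theta * g (1/y) := by
      intro y hy
      rw [hΦ]
      have := NP.scale_id a1 b hb z hy (n := n)
      rw [← hHm, ← hJm] at this
      rw [hg]
      simp only []
      rw [← this]
      ring
    have htendg : Filter.Tendsto (fun y : ℝ => theta * g (1/y)) Filter.atTop (nhds (theta * g 0)) := by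
      apply Filter.Tendsto.const_mul
      apply hgc.tendsto.comp
      have : Filter.Tendsto (fun y : ℝ => 1/y) Filter.atTop (nhds 0) := by
        simpa [one_div] using tendsto_inv_atTop_zero
      exact this
    have htendF : Filter.Tendsto (fun y : ℝ => ‖((y : ℝ):ℂ) * Φ ((y:ℝ) * Complex.I)‖)
        Filter.atTop (nhds 1) := by
      have h1 : Filter.Tendsto (fun y : ℝ => ‖theta * g (1/y)‖) Filter.atTop (nhds ‖theta * g 0‖) :=
        htendg.norm
      rw [hval1] at h1
      have hI : ‖Complex.I‖ = 1 := by simp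
      rw [hI] at h1
      apply h1.congr'
      filter_upwards [Filter.eventually_gt_atTop 0] with y hy
      rw [hid y hy]
    apply le_antisymm
    · apply ciSup_le
      intro p
      exact hbound p.1 p.2
    · have hbdd : BddAbove (Set.range fun p : {y : ℝ // 0 < y} =>
          ‖((p.1 : ℂ)) * Φ ((p.1 : ℝ) * Complex.I)‖) := by
        refine ⟨1, ?_⟩
        rintro x ⟨p, rfl⟩
        exact hbound p.1 p.2
      apply le_of_tendsto htendF
      filter_upwards [Filter.eventually_gt_atTop 0] with y hy
      exact le_ciSup hbdd ⟨y, hy⟩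
end

section
/- Let P_n(λ) = det(λ J_{[0,n-1]} - H_{[0,n-1]}) with J_{[0,n]} positive definite. Then the zeros of P_n and P_{n+1} are all real; moreover -η_n P_n/P_{n+1} is an R₀-function for η_n = det J_{[0,n]}/det J_{[0,n-1]} > 0, because -P_n(λ)/P_{n+1}(λ) = ((H_{[0,n]} - λ J_{[0,n]})^{-1} e_n, e_n); consequently, the zeros of P_n and P_{n+1} interlace strictly. -/
open Complex Matrix

open scoped ComplexOrder

def npC (b : ℕ → ℝ) (m : ℕ) : Matrix (Fin m) (Fin (m + 1)) ℂ :=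
  Matrix.of fun i j =>
    if (i : ℕ) = (j : ℕ) then 1 else if (i : ℕ) + 1 = (j : ℕ) then (b (i : ℕ) : ℂ) else 0

section entries

variable {a1 b : ℕ → ℝ} {z : ℕ → ℂ} {m : ℕ}

lemma npH_diag {i k : Fin m} (h : (i : ℕ) = (k : ℕ)) :
    npH a1 b z 0 m i k = (a1 (i : ℕ) : ℂ) := by
  simp only [npH, of_apply, if_pos h, Nat.zero_add]

lemma npH_up {i k : Fin m} (h : (i : ℕ) + 1 = (k : ℕ)) :
    npH a1 b z 0 m i k = z (i : ℕ) * (b (i : ℕ) : ℂ) := by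
  simp only [npH, of_apply, Nat.zero_add]
  rw [if_neg (by omega), if_pos h]

lemma npH_down {i k : Fin m} (h : (k : ℕ) + 1 = (i : ℕ)) :
    npH a1 b z 0 m i k = (starRingEnd ℂ) (z (k : ℕ)) * (b (k : ℕ) : ℂ) := by
  simp only [npH, of_apply, Nat.zero_add]
  rw [if_neg (by omega), if_neg (by omega), if_pos h]

lemma npH_zero {i k : Fin m} (h1 : (i : ℕ) ≠ (k : ℕ)) (h2 : (i : ℕ) + 1 ≠ (k : ℕ))
    (h3 : (k : ℕ) + 1 ≠ (i : ℕ)) : npH a1 b z 0 m i k = 0 := by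
  simp only [npH, of_apply]
  rw [if_neg h1, if_neg h2, if_neg h3]

lemma npJ_diag {i k : Fin m} (h : (i : ℕ) = (k : ℕ)) :
    npJ b 0 m i k = 1 + (b (i : ℕ) : ℂ) ^ 2 := by
  simp only [npJ, of_apply, if_pos h, Nat.zero_add]

lemma npJ_up {i k : Fin m} (h : (i : ℕ) + 1 = (k : ℕ)) :
    npJ b 0 m i k = (b (i : ℕ) : ℂ) := by
  simp only [npJ, of_apply, Nat.zero_add]
  rw [if_neg (by omega), if_pos h]

lemma npJ_down {i k : Fin m} (h : (k : ℕ) + 1 = (i : ℕ)) :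
    npJ b 0 m i k = (b (k : ℕ) : ℂ) := by
  simp only [npJ, of_apply, Nat.zero_add]
  rw [if_neg (by omega), if_neg (by omega), if_pos h]

lemma npJ_zero {i k : Fin m} (h1 : (i : ℕ) ≠ (k : ℕ)) (h2 : (i : ℕ) + 1 ≠ (k : ℕ))
    (h3 : (k : ℕ) + 1 ≠ (i : ℕ)) : npJ b 0 m i k = 0 := by
  simp only [npJ, of_apply]
  rw [if_neg h1, if_neg h2, if_neg h3]

lemma npC_self {i : Fin m} {j : Fin (m + 1)} (h : (i : ℕ) = (j : ℕ)) : npC b m i j = 1 := by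
  simp only [npC, of_apply, if_pos h]

lemma npC_succ {i : Fin m} {j : Fin (m + 1)} (h : (i : ℕ) + 1 = (j : ℕ)) :
    npC b m i j = (b (i : ℕ) : ℂ) := by
  simp only [npC, of_apply]
  rw [if_neg (by omega), if_pos h]

lemma npC_zero {i : Fin m} {j : Fin (m + 1)} (h1 : (i : ℕ) ≠ (j : ℕ))
    (h2 : (i : ℕ) + 1 ≠ (j : ℕ)) : npC b m i j = 0 := by
  simp only [npC, of_apply]
  rw [if_neg h1, if_neg h2]


lemma npJ_herm : (npJ b 0 m)ᴴ = npJ b 0 m := by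
  ext i k
  rw [conjTranspose_apply]
  rcases Nat.lt_trichotomy (i : ℕ) (k : ℕ) with h | h | h
  · rcases eq_or_lt_of_le (Nat.succ_le_of_lt h) with h1 | h1
    · have h1 : (i : ℕ) + 1 = (k : ℕ) := h1
      simp [npJ_down h1, npJ_up h1, Complex.star_def, Complex.conj_ofReal]
    · rw [npJ_zero (by omega) (by omega) (by omega),
        npJ_zero (by omega) (by omega) (by omega), star_zero]
  · rw [npJ_diag h.symm, npJ_diag h, Fin.ext h]
    simp [Complex.star_def, Complex.conj_ofReal]
  · rcases eq_or_lt_of_le (Nat.succ_le_of_lt h) with h1 | h1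
    · have h1 : (k : ℕ) + 1 = (i : ℕ) := h1
      simp [npJ_up h1, npJ_down h1, Complex.star_def, Complex.conj_ofReal]
    · rw [npJ_zero (by omega) (by omega) (by omega),
        npJ_zero (by omega) (by omega) (by omega), star_zero]

lemma npH_herm : (npH a1 b z 0 m)ᴴ = npH a1 b z 0 m := by
  ext i k
  rw [conjTranspose_apply]
  rcases Nat.lt_trichotomy (i : ℕ) (k : ℕ) with h | h | h
  · rcases eq_or_lt_of_le (Nat.succ_le_of_lt h) with h1 | h1
    · have h1 : (i : ℕ) + 1 = (k : ℕ) := h1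
      simp [npH_down h1, npH_up h1, Complex.star_def, Complex.conj_ofReal]
    · rw [npH_zero (by omega) (by omega) (by omega),
        npH_zero (by omega) (by omega) (by omega), star_zero]
  · rw [npH_diag h.symm, npH_diag h, Fin.ext h]
    simp [Complex.star_def, Complex.conj_ofReal]
  · rcases eq_or_lt_of_le (Nat.succ_le_of_lt h) with h1 | h1
    · have h1 : (k : ℕ) + 1 = (i : ℕ) := h1
      simp [npH_up h1, npH_down h1, Complex.star_def, Complex.conj_ofReal]
    · rw [npH_zero (by omega) (by omega) (by omega),
        npH_zero (by omega) (by omega) (by omega), star_zero]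


lemma npJ_factor : npJ b 0 m = npC b m * (npC b m)ᴴ := by
  ext i k
  have hi := i.isLt
  have hk := k.isLt
  rw [Matrix.mul_apply]
  simp only [conjTranspose_apply]
  rcases Nat.lt_trichotomy (i : ℕ) (k : ℕ) with h | h | h
  · rcases eq_or_lt_of_le (Nat.succ_le_of_lt h) with h1 | h1
    · have h1 : (i : ℕ) + 1 = (k : ℕ) := h1
      rw [Finset.sum_eq_single (⟨(i : ℕ) + 1, by omega⟩ : Fin (m + 1))]
      · rw [npC_succ (i := i) (j := ⟨(i : ℕ) + 1, by omega⟩) (by simp),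
          npC_self (i := k) (j := ⟨(i : ℕ) + 1, by omega⟩) (by simp [← h1]),
          npJ_up h1]
        simp
      · intro j _ hj
        have hj' : (j : ℕ) ≠ (i : ℕ) + 1 := fun hc => hj (by ext; simp [hc])
        rcases eq_or_ne ((i : ℕ)) ((j : ℕ)) with h2 | h2
        · rw [npC_zero (i := k) (j := j) (by omega) (by omega), star_zero, mul_zero]
        · rw [npC_zero (i := i) (j := j) h2 (by omega), zero_mul]
      · simp
    · rw [Finset.sum_eq_zero, npJ_zero (by omega) (by omega) (by omega)]
      intro j _
      rcases eq_or_ne ((i : ℕ)) ((j : ℕ)) with h2 | h2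
      · rw [npC_zero (i := k) (j := j) (by omega) (by omega), star_zero, mul_zero]
      · rcases eq_or_ne ((i : ℕ) + 1) ((j : ℕ)) with h3 | h3
        · rw [npC_zero (i := k) (j := j) (by omega) (by omega), star_zero, mul_zero]
        · rw [npC_zero (i := i) (j := j) h2 h3, zero_mul]
  · obtain rfl : i = k := Fin.ext h
    have hne : (⟨(i : ℕ), by omega⟩ : Fin (m + 1)) ≠ ⟨(i : ℕ) + 1, by omega⟩ := by
      simp [Fin.ext_iff]
    rw [← Finset.sum_subset (Finset.subset_univ
        {(⟨(i : ℕ), by omega⟩ : Fin (m + 1)), ⟨(i : ℕ) + 1, by omega⟩})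
        (fun j _ hj => ?_), Finset.sum_pair hne]
    · rw [npC_self (i := i) (j := ⟨(i : ℕ), by omega⟩) (by simp),
        npC_succ (i := i) (j := ⟨(i : ℕ) + 1, by omega⟩) (by simp),
        npJ_diag rfl]
      simp [Complex.star_def, Complex.conj_ofReal, sq]
    · simp only [Finset.mem_insert, Finset.mem_singleton] at hj
      push_neg at hj
      have h1 : (j : ℕ) ≠ (i : ℕ) := fun hc => hj.1 (by ext; simp [hc.symm])
      have h2 : (j : ℕ) ≠ (i : ℕ) + 1 := fun hc => hj.2 (by ext; simp [hc.symm])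
      rw [npC_zero (i := i) (j := j) (by omega) (by omega), zero_mul]
  · rcases eq_or_lt_of_le (Nat.succ_le_of_lt h) with h1 | h1
    · have h1 : (k : ℕ) + 1 = (i : ℕ) := h1
      rw [Finset.sum_eq_single (⟨(k : ℕ) + 1, by omega⟩ : Fin (m + 1))]
      · rw [npC_self (i := i) (j := ⟨(k : ℕ) + 1, by omega⟩) (by simp [← h1]),
          npC_succ (i := k) (j := ⟨(k : ℕ) + 1, by omega⟩) (by simp),
          npJ_down h1]
        simp [Complex.star_def, Complex.conj_ofReal]
      · intro j _ hj
        have hj' : (j : ℕ) ≠ (k : ℕ) + 1 := fun hc => hj (by ext; simp [hc])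
        rcases eq_or_ne ((k : ℕ)) ((j : ℕ)) with h2 | h2
        · rw [npC_zero (i := i) (j := j) (by omega) (by omega), zero_mul]
        · rw [npC_zero (i := k) (j := j) h2 (by omega), star_zero, mul_zero]
      · simp
    · rw [Finset.sum_eq_zero, npJ_zero (by omega) (by omega) (by omega)]
      intro j _
      rcases eq_or_ne ((i : ℕ)) ((j : ℕ)) with h2 | h2
      · rw [npC_zero (i := k) (j := j) (by omega) (by omega), star_zero, mul_zero]
      · rcases eq_or_ne ((i : ℕ) + 1) ((j : ℕ)) with h3 | h3
        · rw [npC_zero (i := k) (j := j) (by omega) (by omega), star_zero, mul_zero]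
        · rw [npC_zero (i := i) (j := j) h2 h3, zero_mul]

end entries
section chunk2

variable {a1 b : ℕ → ℝ} {z : ℕ → ℂ} {m : ℕ}

lemma npCH_mulVec_eq_zero {v : Fin m → ℂ} (hv : (npC b m)ᴴ *ᵥ v = 0) : v = 0 := by
  have key : ∀ N : ℕ, ∀ i : Fin m, (i : ℕ) = N → v i = 0 := by
    intro N
    induction N with
    | zero =>
      intro i hi
      have h0 := congrFun hv ⟨0, by omega⟩
      simp only [Matrix.mulVec, dotProduct, conjTranspose_apply, Pi.zero_apply] at h0
      rw [Finset.sum_eq_single i] at h0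
      · rw [npC_self (by simp [hi])] at h0
        simpa using h0
      · intro l _ hl
        rw [npC_zero (i := l) (j := ⟨0, by omega⟩)
            (by simp [Fin.ext_iff] at hl ⊢; omega) (by simp), star_zero, zero_mul]
      · intro hc
        exact absurd (Finset.mem_univ i) hc
    | succ N ih =>
      intro i hi
      have h0 := congrFun hv ⟨N + 1, by omega⟩
      simp only [Matrix.mulVec, dotProduct, conjTranspose_apply, Pi.zero_apply] at h0
      rw [Finset.sum_eq_single i] at h0
      · rw [npC_self (by simp [hi])] at h0
        simpa using h0
      · intro l _ hl
        rcases eq_or_ne ((l : ℕ)) N with h2 | h2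
        · rw [ih l h2, mul_zero]
        · rw [npC_zero (i := l) (j := ⟨N + 1, by omega⟩)
            (by simp [Fin.ext_iff] at hl ⊢; omega) (by simp; omega), star_zero, zero_mul]
      · intro hc
        exact absurd (Finset.mem_univ i) hc
  funext i
  exact key (i : ℕ) i rfl

lemma quadJ_pos (v : Fin m → ℂ) (hv : v ≠ 0) :
    0 < star v ⬝ᵥ (npJ b 0 m *ᵥ v) := by
  rw [npJ_factor, ← Matrix.mulVec_mulVec, dotProduct_mulVec,
    ← Matrix.conjTranspose_conjTranspose (npC b m), ← Matrix.star_mulVec]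
  rw [Matrix.conjTranspose_conjTranspose]
  exact dotProduct_star_self_pos_iff.mpr fun hc => hv (npCH_mulVec_eq_zero hc)

lemma quadJ_re_pos (v : Fin m → ℂ) (hv : v ≠ 0) :
    0 < (star v ⬝ᵥ (npJ b 0 m *ᵥ v)).re ∧ (star v ⬝ᵥ (npJ b 0 m *ᵥ v)).im = 0 := by
  have := quadJ_pos (b := b) v hv
  rw [Complex.lt_def] at this
  exact ⟨by simpa using this.1, by simpa using this.2.symm⟩

lemma npJ_posDef : (npJ b 0 m).PosDef :=
  Matrix.PosDef.of_dotProduct_mulVec_pos npJ_herm fun v hv => quadJ_pos v hv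

lemma npJ_det_pos : 0 < (npJ b 0 m).det.re ∧ (npJ b 0 m).det.im = 0 := by
  have := (npJ_posDef (b := b) (m := m)).det_pos
  rw [Complex.lt_def] at this
  exact ⟨by simpa using this.1, by simpa using this.2.symm⟩

lemma herm_quad_real {M : Matrix (Fin m) (Fin m) ℂ} (hM : Mᴴ = M) (v : Fin m → ℂ) :
    (star v ⬝ᵥ (M *ᵥ v)).im = 0 := by
  rw [← Complex.conj_eq_iff_im, ← Complex.star_def]
  calc star (star v ⬝ᵥ (M *ᵥ v)) = star (M *ᵥ v) ⬝ᵥ v := by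
        rw [Matrix.star_dotProduct, star_star]
    _ = (star v ᵥ* Mᴴ) ⬝ᵥ v := by rw [Matrix.star_mulVec]
    _ = star v ⬝ᵥ (Mᴴ *ᵥ v) := (dotProduct_mulVec _ _ _).symm
    _ = star v ⬝ᵥ (M *ᵥ v) := by rw [hM]

lemma pencil_zero_im {lam : ℂ} (h : (lam • npJ b 0 m - npH a1 b z 0 m).det = 0) :
    lam.im = 0 := by
  obtain ⟨v, hv0, hveq⟩ := Matrix.exists_mulVec_eq_zero_iff.mpr h
  have hdp : star v ⬝ᵥ ((lam • npJ b 0 m - npH a1 b z 0 m) *ᵥ v) = 0 := by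
    rw [hveq, dotProduct_zero]
  rw [Matrix.sub_mulVec, dotProduct_sub, Matrix.smul_mulVec,
    dotProduct_smul] at hdp
  have him := congrArg Complex.im hdp
  have hJ := quadJ_re_pos (b := b) v hv0
  have hH := herm_quad_real (npH_herm (a1 := a1) (b := b) (z := z) (m := m)) v
  simp only [Complex.sub_im, Complex.smul_im, Complex.zero_im, hH, sub_zero,
    smul_eq_mul, Complex.mul_im, hJ.2, mul_zero, add_zero, zero_add] at him
  rcases mul_eq_zero.mp him with h1 | h1
  · exact h1
  · exact absurd h1 (ne_of_gt hJ.1)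

lemma pencil_det_ne_zero {lam : ℂ} (hlam : lam.im ≠ 0) :
    (lam • npJ b 0 m - npH a1 b z 0 m).det ≠ 0 :=
  fun hc => hlam (pencil_zero_im hc)

lemma npH_submatrix :
    (npH a1 b z 0 (m + 1)).submatrix Fin.castSucc Fin.castSucc = npH a1 b z 0 m := by
  ext i k
  simp only [Matrix.submatrix_apply, npH, of_apply, Fin.coe_castSucc]

lemma npJ_submatrix :
    (npJ b 0 (m + 1)).submatrix Fin.castSucc Fin.castSucc = npJ b 0 m := by
  ext i k
  simp only [Matrix.submatrix_apply, npJ, of_apply, Fin.coe_castSucc]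

lemma inv_last_entry (n : ℕ) (lam : ℂ)
    (hdet : (lam • npJ b 0 (n + 1) - npH a1 b z 0 (n + 1)).det ≠ 0) :
    (npH a1 b z 0 (n + 1) - lam • npJ b 0 (n + 1))⁻¹ (Fin.last n) (Fin.last n) =
      -(lam • npJ b 0 n - npH a1 b z 0 n).det /
        (lam • npJ b 0 (n + 1) - npH a1 b z 0 (n + 1)).det := by
  set B1 := lam • npJ b 0 (n + 1) - npH a1 b z 0 (n + 1) with hB1
  set B0 := lam • npJ b 0 n - npH a1 b z 0 n with hB0
  have hA : npH a1 b z 0 (n + 1) - lam • npJ b 0 (n + 1) = -B1 := by rw [hB1, neg_sub]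
  have hdetA : (-B1).det = (-1) ^ (n + 1) * B1.det := by
    rw [Matrix.det_neg, Fintype.card_fin]
  have hAsub : (-B1).submatrix Fin.castSucc Fin.castSucc = -B0 := by
    ext i k
    simp only [Matrix.submatrix_apply, Matrix.neg_apply, Matrix.sub_apply, Matrix.smul_apply,
      hB0, hB1]
    rw [show (npJ b 0 (n+1)) (Fin.castSucc i) (Fin.castSucc k) = npJ b 0 n i k from
        congrFun (congrFun npJ_submatrix i) k,
      show (npH a1 b z 0 (n+1)) (Fin.castSucc i) (Fin.castSucc k) = npH a1 b z 0 n i k from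
        congrFun (congrFun npH_submatrix i) k]
  have hadj : (-B1).adjugate (Fin.last n) (Fin.last n) = (-B0).det := by
    rw [Matrix.adjugate_apply, Matrix.det_succ_row _ (Fin.last n),
      Finset.sum_eq_single (Fin.last n)]
    · rw [Matrix.updateRow_self]
      simp only [Pi.single_eq_same, Fin.val_last, Fin.succAbove_last]
      have : ((Matrix.updateRow (-B1) (Fin.last n) (Pi.single (Fin.last n) 1)).submatrix
          Fin.castSucc Fin.castSucc) = (-B1).submatrix Fin.castSucc Fin.castSucc := by
        ext i k
        rw [Matrix.submatrix_apply, Matrix.updateRow_ne (Fin.castSucc_lt_last i).ne,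
          Matrix.submatrix_apply]
      rw [this, hAsub, ← two_mul, pow_mul, neg_one_sq, one_pow, one_mul, one_mul]
    · intro j _ hj
      rw [Matrix.updateRow_self, Pi.single_eq_of_ne hj, mul_zero, zero_mul]
    · intro hc
      exact absurd (Finset.mem_univ _) hc
  have hdetB0 : (-B0).det = (-1) ^ n * B0.det := by
    rw [Matrix.det_neg, Fintype.card_fin]
  have hAdet_ne : (-B1).det ≠ 0 := by
    rw [hdetA]
    exact mul_ne_zero (pow_ne_zero _ (by norm_num)) hdet
  rw [hA, Matrix.inv_def, Matrix.smul_apply, hadj, Ring.inverse_eq_inv', hdetA, hdetB0]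
  have hpow : ((-1 : ℂ)) ^ n ≠ 0 := pow_ne_zero _ (by norm_num)
  field_simp
  rw [smul_eq_mul, pow_succ]
  field_simp
end chunk2
section chunk3

variable {a1 b : ℕ → ℝ} {z : ℕ → ℂ} {m : ℕ}

lemma detA_eq (lam : ℂ) :
    (npH a1 b z 0 m - lam • npJ b 0 m).det =
      (-1) ^ m * (lam • npJ b 0 m - npH a1 b z 0 m).det := by
  rw [show npH a1 b z 0 m - lam • npJ b 0 m = -(lam • npJ b 0 m - npH a1 b z 0 m) from
    (neg_sub _ _).symm, Matrix.det_neg, Fintype.card_fin]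

lemma detA_ne_zero {lam : ℂ} (h : (lam • npJ b 0 m - npH a1 b z 0 m).det ≠ 0) :
    (npH a1 b z 0 m - lam • npJ b 0 m).det ≠ 0 := by
  rw [detA_eq]
  exact mul_ne_zero (pow_ne_zero _ (by norm_num)) h

lemma pencilB_herm (t : ℝ) :
    ((t : ℂ) • npJ b 0 m - npH a1 b z 0 m)ᴴ = (t : ℂ) • npJ b 0 m - npH a1 b z 0 m := by
  rw [Matrix.conjTranspose_sub, Matrix.conjTranspose_smul, npJ_herm, npH_herm,
    Complex.star_def, Complex.conj_ofReal]

lemma pencilA_herm (t : ℝ) :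
    (npH a1 b z 0 m - (t : ℂ) • npJ b 0 m)ᴴ = npH a1 b z 0 m - (t : ℂ) • npJ b 0 m := by
  rw [Matrix.conjTranspose_sub, Matrix.conjTranspose_smul, npJ_herm, npH_herm,
    Complex.star_def, Complex.conj_ofReal]

lemma pencil_det_real (t : ℝ) :
    (((t : ℂ) • npJ b 0 m - npH a1 b z 0 m).det).im = 0 := by
  rw [← Complex.conj_eq_iff_im, ← Complex.star_def, ← Matrix.det_conjTranspose,
    pencilB_herm]

lemma resolvent_conj (n : ℕ) (lam : ℂ)
    (hdet : (lam • npJ b 0 (n + 1) - npH a1 b z 0 (n + 1)).det ≠ 0) :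
    ∃ g h : ℝ, 0 < g ∧
      star ((npH a1 b z 0 (n + 1) - lam • npJ b 0 (n + 1))⁻¹ (Fin.last n) (Fin.last n)) =
        (h : ℂ) - lam * (g : ℂ) := by
  set A := npH a1 b z 0 (n + 1) - lam • npJ b 0 (n + 1) with hA
  have hdA : A.det ≠ 0 := detA_ne_zero hdet
  have hunit : IsUnit A.det := isUnit_iff_ne_zero.mpr hdA
  set u : Fin (n + 1) → ℂ := A⁻¹ *ᵥ Pi.single (Fin.last n) 1 with hu
  have hAu : A *ᵥ u = Pi.single (Fin.last n) 1 := by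
    rw [hu, Matrix.mulVec_mulVec, Matrix.mul_nonsing_inv _ hunit, Matrix.one_mulVec]
  have hune : u ≠ 0 := by
    intro hc
    have := congrFun hAu (Fin.last n)
    rw [hc, Matrix.mulVec_zero] at this
    simp at this
  have hulast : u (Fin.last n) = A⁻¹ (Fin.last n) (Fin.last n) := by
    rw [hu, Matrix.mulVec_single]
    exact mul_one _
  have hqJ := quadJ_re_pos (b := b) u hune
  have hqH := herm_quad_real (npH_herm (a1 := a1) (b := b) (z := z) (m := n + 1)) u
  set qJ := star u ⬝ᵥ (npJ b 0 (n + 1) *ᵥ u) with hqJdef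
  set qH := star u ⬝ᵥ (npH a1 b z 0 (n + 1) *ᵥ u) with hqHdef
  refine ⟨qJ.re, qH.re, hqJ.1, ?_⟩
  have h1 : star u ⬝ᵥ (A *ᵥ u) = star (u (Fin.last n)) := by
    rw [hAu, dotProduct_single, mul_one, Pi.star_apply]
  have h2 : star u ⬝ᵥ (A *ᵥ u) = qH - lam * qJ := by
    rw [hA, Matrix.sub_mulVec, dotProduct_sub, Matrix.smul_mulVec,
      dotProduct_smul, smul_eq_mul]
  have hqJr : qJ = (qJ.re : ℂ) := Complex.ext rfl (by simp [hqJ.2])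
  have hqHr : qH = (qH.re : ℂ) := Complex.ext rfl (by simp [hqH])
  rw [← hulast, ← h1, h2, hqJr, hqHr]
  simp

lemma resolvent_im (n : ℕ) (lam : ℂ)
    (hdet : (lam • npJ b 0 (n + 1) - npH a1 b z 0 (n + 1)).det ≠ 0) :
    ∃ g : ℝ, 0 < g ∧
      ((npH a1 b z 0 (n + 1) - lam • npJ b 0 (n + 1))⁻¹ (Fin.last n) (Fin.last n)).im =
        g * lam.im := by
  obtain ⟨g, h, hg, heq⟩ := resolvent_conj n lam hdet
  refine ⟨g, hg, ?_⟩
  have := congrArg Complex.im heq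
  simp only [Complex.star_def, Complex.conj_im, Complex.sub_im, Complex.ofReal_im,
    Complex.mul_im, Complex.ofReal_re, zero_sub, mul_zero, add_zero] at this
  have := neg_eq_iff_eq_neg.mp this
  rw [this]
  ring

end chunk3
section chunk4

variable {a1 b : ℕ → ℝ} {z : ℕ → ℂ} {m : ℕ}

lemma pencil_up_entry (t : ℂ) {i k : Fin m} (h : (i : ℕ) + 1 = (k : ℕ)) :
    (t • npJ b 0 m - npH a1 b z 0 m) i k = (t - z (i : ℕ)) * (b (i : ℕ) : ℂ) := by
  rw [Matrix.sub_apply, Matrix.smul_apply, npJ_up h, npH_up h, smul_eq_mul]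
  ring

lemma pencil_down_entry (t : ℂ) {i k : Fin m} (h : (k : ℕ) + 1 = (i : ℕ)) :
    (t • npJ b 0 m - npH a1 b z 0 m) i k =
      (t - (starRingEnd ℂ) (z (k : ℕ))) * (b (k : ℕ) : ℂ) := by
  rw [Matrix.sub_apply, Matrix.smul_apply, npJ_down h, npH_down h, smul_eq_mul]
  ring

lemma pencil_zero_entry (t : ℂ) {i k : Fin m} (h1 : (i : ℕ) ≠ (k : ℕ))
    (h2 : (i : ℕ) + 1 ≠ (k : ℕ)) (h3 : (k : ℕ) + 1 ≠ (i : ℕ)) :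
    (t • npJ b 0 m - npH a1 b z 0 m) i k = 0 := by
  rw [Matrix.sub_apply, Matrix.smul_apply, npJ_zero h1 h2 h3, npH_zero h1 h2 h3,
    smul_zero, sub_zero]

lemma up_factor_ne (t : ℝ) {j : ℕ} (hz : 0 < (z j).im) (hb : 0 < b j) :
    ((t : ℂ) - z j) * (b j : ℂ) ≠ 0 := by
  intro hc
  rcases mul_eq_zero.mp hc with h | h
  · have him := congrArg Complex.im h
    simp only [Complex.sub_im, Complex.ofReal_im, Complex.zero_im, zero_sub,
      neg_eq_zero] at him
    exact (ne_of_gt hz) him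
  · exact (Complex.ofReal_ne_zero.mpr (ne_of_gt hb)) h

lemma down_factor_ne (t : ℝ) {j : ℕ} (hz : 0 < (z j).im) (hb : 0 < b j) :
    ((t : ℂ) - (starRingEnd ℂ) (z j)) * (b j : ℂ) ≠ 0 := by
  intro hc
  rcases mul_eq_zero.mp hc with h | h
  · have him := congrArg Complex.im h
    simp only [Complex.sub_im, Complex.ofReal_im, Complex.conj_im, Complex.zero_im,
      zero_sub, neg_neg] at him
    exact (ne_of_gt hz) him
  · exact (Complex.ofReal_ne_zero.mpr (ne_of_gt hb)) h

lemma pencil_kernel_last (hb : ∀ j, 0 < b j) (hz : ∀ j, 0 < (z j).im) (t : ℝ)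
    {v : Fin (m + 1) → ℂ}
    (hv : ((t : ℂ) • npJ b 0 (m + 1) - npH a1 b z 0 (m + 1)) *ᵥ v = 0)
    (hlast : v (Fin.last m) = 0) : v = 0 := by
  set M := (t : ℂ) • npJ b 0 (m + 1) - npH a1 b z 0 (m + 1) with hM
  have key : ∀ d : ℕ, ∀ j : Fin (m + 1), m - d ≤ (j : ℕ) → v j = 0 := by
    intro d
    induction d with
    | zero =>
      intro j hj
      have hjv := j.isLt
      have : j = Fin.last m := Fin.ext (by simp only [Fin.val_last]; omega)
      rw [this]; exact hlast
    | succ d ih =>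
      intro j hj
      by_cases hcase : m - d ≤ (j : ℕ)
      · exact ih j hcase
      · push_neg at hcase
        have hjv := j.isLt
        have row := congrFun hv ⟨(j : ℕ) + 1, by omega⟩
        simp only [Matrix.mulVec, dotProduct, Pi.zero_apply] at row
        rw [Finset.sum_eq_single j] at row
        · have hent : M ⟨(j : ℕ) + 1, by omega⟩ j =
              ((t : ℂ) - (starRingEnd ℂ) (z (j : ℕ))) * (b (j : ℕ) : ℂ) := by
            rw [hM]; exact pencil_down_entry _ (by simp)
          rw [hent] at row
          rcases mul_eq_zero.mp row with h | h
          · exact absurd h (down_factor_ne t (hz _) (hb _))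
          · exact h
        · intro l _ hl
          by_cases hld : m - d ≤ (l : ℕ)
          · rw [ih l hld, mul_zero]
          · have hlv := l.isLt
            have hlj : (l : ℕ) < (j : ℕ) + 1 := by omega
            have hlj2 : (l : ℕ) ≠ (j : ℕ) := fun hc => hl (Fin.ext hc)
            rw [hM, pencil_zero_entry (t : ℂ) (by simp; omega) (by simp; omega)
              (by simp; omega), zero_mul]
        · intro hc; exact absurd (Finset.mem_univ _) hc
  funext j
  exact key m j (by omega)

lemma pencil_submatrix (lam : ℂ) (i j : Fin m) :
    (lam • npJ b 0 (m + 1) - npH a1 b z 0 (m + 1)) (Fin.castSucc i) (Fin.castSucc j) =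
      (lam • npJ b 0 m - npH a1 b z 0 m) i j := by
  simp only [Matrix.sub_apply, Matrix.smul_apply]
  rw [show (npJ b 0 (m + 1)) (Fin.castSucc i) (Fin.castSucc j) = npJ b 0 m i j from
      congrFun (congrFun npJ_submatrix i) j,
    show (npH a1 b z 0 (m + 1)) (Fin.castSucc i) (Fin.castSucc j) = npH a1 b z 0 m i j from
      congrFun (congrFun npH_submatrix i) j]

lemma no_common_zero (hb : ∀ j, 0 < b j) (hz : ∀ j, 0 < (z j).im) (n : ℕ) (t : ℝ)
    (h1 : ((t : ℂ) • npJ b 0 (n + 1) - npH a1 b z 0 (n + 1)).det = 0)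
    (h0 : ((t : ℂ) • npJ b 0 n - npH a1 b z 0 n).det = 0) : False := by
  cases n with
  | zero =>
    rw [Matrix.det_fin_zero] at h0
    exact one_ne_zero h0
  | succ k =>
    obtain ⟨w, hw0, hw⟩ := Matrix.exists_mulVec_eq_zero_iff.mpr h1
    obtain ⟨v, hv0, hv⟩ := Matrix.exists_mulVec_eq_zero_iff.mpr h0
    have hwlast : w (Fin.last (k + 1)) ≠ 0 :=
      fun hc => hw0 (pencil_kernel_last hb hz t hw hc)
    have hvlast : v (Fin.last k) ≠ 0 :=
      fun hc => hv0 (pencil_kernel_last hb hz t hv hc)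
    set M1 := (t : ℂ) • npJ b 0 (k + 2) - npH a1 b z 0 (k + 2) with hM1
    set M0 := (t : ℂ) • npJ b 0 (k + 1) - npH a1 b z 0 (k + 1) with hM0
    set w' : Fin (k + 1) → ℂ := fun i => w (Fin.castSucc i) with hw'
    have hMw : M0 *ᵥ w' = fun i : Fin (k + 1) =>
        if (i : ℕ) = k then -(M1 (Fin.castSucc i) (Fin.last (k + 1))) * w (Fin.last (k + 1))
        else 0 := by
      funext i
      have row := congrFun hw (Fin.castSucc i)
      rw [Matrix.mulVec, Pi.zero_apply] at row
      rw [show (M1 (Fin.castSucc i) ⬝ᵥ w) =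
          ∑ j : Fin (k + 2), M1 (Fin.castSucc i) j * w j from rfl,
        Fin.sum_univ_castSucc] at row
      have hsub : ∀ j : Fin (k + 1),
          M1 (Fin.castSucc i) (Fin.castSucc j) = M0 i j := fun j => pencil_submatrix _ i j
      have hrow2 : (M0 *ᵥ w') i =
          -(M1 (Fin.castSucc i) (Fin.last (k + 1)) * w (Fin.last (k + 1))) := by
        calc (M0 *ᵥ w') i = ∑ j : Fin (k + 1), M0 i j * w' j := rfl
          _ = ∑ j : Fin (k + 1),
              M1 (Fin.castSucc i) (Fin.castSucc j) * w (Fin.castSucc j) :=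
            Finset.sum_congr rfl fun j _ => by rw [hsub j]
          _ = -(M1 (Fin.castSucc i) (Fin.last (k + 1)) * w (Fin.last (k + 1))) :=
            eq_neg_of_add_eq_zero_left row
      rw [hrow2]
      by_cases hik : (i : ℕ) = k
      · rw [if_pos hik]; ring
      · rw [if_neg hik]
        have hiv := i.isLt
        rw [hM1, pencil_zero_entry (t : ℂ) (by simp [Fin.val_last]; omega)
          (by simp [Fin.val_last]; omega) (by simp [Fin.val_last]; omega)]
        ring
    have hS0 : star v ⬝ᵥ (M0 *ᵥ w') = 0 := by
      rw [dotProduct_mulVec, show star v ᵥ* M0 = 0 from ?_, zero_dotProduct]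
      have := Matrix.star_mulVec (M := M0) (v := v)
      rw [hv, star_zero, pencilB_herm] at this
      exact this.symm
    rw [hMw] at hS0
    rw [show (star v ⬝ᵥ fun i : Fin (k + 1) =>
        if (i : ℕ) = k then -(M1 (Fin.castSucc i) (Fin.last (k + 1))) * w (Fin.last (k + 1))
        else 0) = ∑ i : Fin (k + 1), star (v i) *
          (if (i : ℕ) = k then -(M1 (Fin.castSucc i) (Fin.last (k + 1))) * w (Fin.last (k + 1))
          else 0) from rfl, Finset.sum_eq_single (Fin.last k)] at hS0
    · rw [if_pos (by simp [Fin.val_last])] at hS0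
      have hent : M1 (Fin.castSucc (Fin.last k)) (Fin.last (k + 1)) =
          ((t : ℂ) - z k) * (b k : ℂ) := by
        rw [hM1]
        exact pencil_up_entry _ (by simp [Fin.val_last])
      rw [hent] at hS0
      rcases mul_eq_zero.mp hS0 with h | h
      · rw [star_eq_zero] at h
        exact hvlast h
      · rcases mul_eq_zero.mp h with h' | h'
        · exact (up_factor_ne t (hz _) (hb _)) (neg_eq_zero.mp h')
        · exact hwlast h'
    · intro l _ hl
      rw [if_neg (fun hc => hl (Fin.ext (by simp [Fin.val_last, hc]))), mul_zero]
    · intro hc; exact absurd (Finset.mem_univ _) hc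

end chunk4
section chunk5

variable {a1 b : ℕ → ℝ} {z : ℕ → ℂ} {n : ℕ}

lemma cont_A :
    Continuous fun s : ℝ => npH a1 b z 0 (n + 1) - (s : ℂ) • npJ b 0 (n + 1) := by
  apply continuous_matrix
  intro i j
  have : (fun s : ℝ => (npH a1 b z 0 (n + 1) - (s : ℂ) • npJ b 0 (n + 1)) i j) =
      fun s : ℝ => npH a1 b z 0 (n + 1) i j - (s : ℂ) * npJ b 0 (n + 1) i j := by
    funext s
    rw [Matrix.sub_apply, Matrix.smul_apply, smul_eq_mul]
  rw [this]
  exact continuous_const.sub (Complex.continuous_ofReal.mul continuous_const)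

lemma cont_detA :
    Continuous fun s : ℝ => (npH a1 b z 0 (n + 1) - (s : ℂ) • npJ b 0 (n + 1)).det :=
  cont_A.matrix_det

lemma cont_u (i : Fin (n + 1)) :
    ContinuousOn (fun s : ℝ => (npH a1 b z 0 (n + 1) - (s : ℂ) • npJ b 0 (n + 1))⁻¹ i
      (Fin.last n))
      {s : ℝ | (npH a1 b z 0 (n + 1) - (s : ℂ) • npJ b 0 (n + 1)).det ≠ 0} := by
  have heq : ∀ s : ℝ, (npH a1 b z 0 (n + 1) - (s : ℂ) • npJ b 0 (n + 1))⁻¹ i (Fin.last n) =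
      ((npH a1 b z 0 (n + 1) - (s : ℂ) • npJ b 0 (n + 1)).det)⁻¹ *
        (npH a1 b z 0 (n + 1) - (s : ℂ) • npJ b 0 (n + 1)).adjugate i (Fin.last n) := by
    intro s
    rw [Matrix.inv_def, Ring.inverse_eq_inv', Matrix.smul_apply, smul_eq_mul]
  simp only [heq]
  exact (cont_detA.continuousOn.inv₀ fun s hs => hs).mul
    ((cont_A.matrix_adjugate.matrix_elem i (Fin.last n)).continuousOn)

lemma detB_ne_zero {m : ℕ} {lam : ℂ}
    (h : (npH a1 b z 0 m - lam • npJ b 0 m).det ≠ 0) :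
    (lam • npJ b 0 m - npH a1 b z 0 m).det ≠ 0 := by
  intro hc
  exact h (by rw [detA_eq, hc, mul_zero])

lemma inv_diff (s t : ℝ)
    (hs : ((s : ℂ) • npJ b 0 (n + 1) - npH a1 b z 0 (n + 1)).det ≠ 0)
    (ht : ((t : ℂ) • npJ b 0 (n + 1) - npH a1 b z 0 (n + 1)).det ≠ 0) :
    (npH a1 b z 0 (n + 1) - (s : ℂ) • npJ b 0 (n + 1))⁻¹ (Fin.last n) (Fin.last n) -
      (npH a1 b z 0 (n + 1) - (t : ℂ) • npJ b 0 (n + 1))⁻¹ (Fin.last n) (Fin.last n) =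
      ((s : ℂ) - (t : ℂ)) *
        (star (fun i => (npH a1 b z 0 (n + 1) - (s : ℂ) • npJ b 0 (n + 1))⁻¹ i (Fin.last n)) ⬝ᵥ
          (npJ b 0 (n + 1) *ᵥ
            fun i => (npH a1 b z 0 (n + 1) - (t : ℂ) • npJ b 0 (n + 1))⁻¹ i (Fin.last n))) := by
  set As := npH a1 b z 0 (n + 1) - (s : ℂ) • npJ b 0 (n + 1) with hAs
  set At := npH a1 b z 0 (n + 1) - (t : ℂ) • npJ b 0 (n + 1) with hAt
  have hsu : IsUnit As.det := isUnit_iff_ne_zero.mpr (detA_ne_zero hs)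
  have htu : IsUnit At.det := isUnit_iff_ne_zero.mpr (detA_ne_zero ht)
  have hdiff : At - As = ((s : ℂ) - (t : ℂ)) • npJ b 0 (n + 1) := by
    ext i j
    rw [Matrix.sub_apply, hAs, hAt, Matrix.sub_apply, Matrix.sub_apply, Matrix.smul_apply,
      Matrix.smul_apply, Matrix.smul_apply, smul_eq_mul, smul_eq_mul, smul_eq_mul]
    ring
  have key : As⁻¹ - At⁻¹ = ((s : ℂ) - (t : ℂ)) • (As⁻¹ * (npJ b 0 (n + 1) * At⁻¹)) := by
    calc As⁻¹ - At⁻¹ = As⁻¹ * (At * At⁻¹) - (As⁻¹ * As) * At⁻¹ := by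
          rw [Matrix.mul_nonsing_inv _ htu, Matrix.nonsing_inv_mul _ hsu, mul_one, one_mul]
      _ = As⁻¹ * (At * At⁻¹) - As⁻¹ * (As * At⁻¹) := by rw [Matrix.mul_assoc]
      _ = As⁻¹ * ((At - As) * At⁻¹) := by
          rw [Matrix.sub_mul At As At⁻¹, Matrix.mul_sub As⁻¹ (At * At⁻¹) (As * At⁻¹)]
      _ = ((s : ℂ) - (t : ℂ)) • (As⁻¹ * (npJ b 0 (n + 1) * At⁻¹)) := by
          rw [hdiff, Matrix.smul_mul, Matrix.mul_smul]
  have hXh : As⁻¹ᴴ = As⁻¹ := by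
    rw [Matrix.conjTranspose_nonsing_inv, hAs, pencilA_herm]
  have hentry := congrFun (congrFun key (Fin.last n)) (Fin.last n)
  rw [Matrix.sub_apply, Matrix.smul_apply, smul_eq_mul] at hentry
  rw [hentry]
  congr 1
  rw [Matrix.mul_apply]
  apply Finset.sum_congr rfl
  intro i _
  have h1 : As⁻¹ (Fin.last n) i = star (As⁻¹ i (Fin.last n)) := by
    conv_lhs => rw [← hXh]
    rw [Matrix.conjTranspose_apply]
  rw [h1, Pi.star_apply]
  rfl

lemma W_hasDerivAt (t0 : ℝ)
    (h : ((t0 : ℂ) • npJ b 0 (n + 1) - npH a1 b z 0 (n + 1)).det ≠ 0) :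
    ∃ g : ℝ, 0 < g ∧ HasDerivAt
      (fun s : ℝ =>
        ((npH a1 b z 0 (n + 1) - (s : ℂ) • npJ b 0 (n + 1))⁻¹ (Fin.last n) (Fin.last n)).re)
      g t0 := by
  classical
  set A : ℝ → Matrix (Fin (n + 1)) (Fin (n + 1)) ℂ :=
    fun s => npH a1 b z 0 (n + 1) - (s : ℂ) • npJ b 0 (n + 1) with hA
  set S : Set ℝ := {s : ℝ | (A s).det ≠ 0} with hS
  have hSopen : IsOpen S := by
    have : S = (fun s : ℝ => (A s).det) ⁻¹' {(0 : ℂ)}ᶜ := rfl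
    rw [this]
    exact IsOpen.preimage cont_detA isOpen_compl_singleton
  have ht0S : t0 ∈ S := detA_ne_zero h
  have hmem : S ∈ nhds t0 := hSopen.mem_nhds ht0S
  set uT : Fin (n + 1) → ℂ := fun i => (A t0)⁻¹ i (Fin.last n) with huT
  set c : ℝ → ℂ := fun s =>
    star (fun i => (A s)⁻¹ i (Fin.last n)) ⬝ᵥ (npJ b 0 (n + 1) *ᵥ uT) with hc
  have hc_cont : ContinuousOn c S := by
    have hceq : c = fun s => ∑ i, star ((A s)⁻¹ i (Fin.last n)) * (npJ b 0 (n + 1) *ᵥ uT) i :=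
      rfl
    rw [hceq]
    exact continuousOn_finset_sum _ fun i _ => ((cont_u i).star).mul continuousOn_const
  have hc_at : ContinuousAt c t0 := hc_cont.continuousAt hmem
  have hsmem : ∀ᶠ s in nhdsWithin t0 {t0}ᶜ, s ∈ S := by
    have h' : ∀ᶠ s in nhds t0, s ∈ S := hmem
    exact h'.filter_mono nhdsWithin_le_nhds
  have hslope : ∀ᶠ s in nhdsWithin t0 {t0}ᶜ,
      slope (fun s : ℝ => (A s)⁻¹ (Fin.last n) (Fin.last n)) t0 s = c s := by
    filter_upwards [hsmem, self_mem_nhdsWithin] with s hsS hsne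
    have hne : s - t0 ≠ 0 := sub_ne_zero.mpr hsne
    have hsB : ((s : ℂ) • npJ b 0 (n + 1) - npH a1 b z 0 (n + 1)).det ≠ 0 :=
      detB_ne_zero hsS
    have htB : ((t0 : ℂ) • npJ b 0 (n + 1) - npH a1 b z 0 (n + 1)).det ≠ 0 :=
      detB_ne_zero ht0S
    rw [slope_def_module, inv_diff s t0 hsB htB]
    have : ((s : ℂ) - (t0 : ℂ)) = ((s - t0 : ℝ) : ℂ) := by push_cast; ring
    rw [this, Complex.real_smul, Complex.ofReal_inv, ← mul_assoc,
      inv_mul_cancel₀ (Complex.ofReal_ne_zero.mpr hne), one_mul]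
  have hW : HasDerivAt (fun s : ℝ => (A s)⁻¹ (Fin.last n) (Fin.last n)) (c t0) t0 := by
    rw [hasDerivAt_iff_tendsto_slope]
    rw [Filter.tendsto_congr' hslope]
    exact hc_at.tendsto.mono_left nhdsWithin_le_nhds
  have huT_ne : uT ≠ 0 := by
    intro hc0
    have hunit : IsUnit (A t0).det := isUnit_iff_ne_zero.mpr ht0S
    have hAu : A t0 *ᵥ uT = Pi.single (Fin.last n) 1 := by
      have : uT = (A t0)⁻¹ *ᵥ Pi.single (Fin.last n) 1 := by
        funext i
        rw [Matrix.mulVec_single, huT]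
        exact (mul_one _).symm
      rw [this, Matrix.mulVec_mulVec, Matrix.mul_nonsing_inv _ hunit, Matrix.one_mulVec]
    rw [hc0, Matrix.mulVec_zero] at hAu
    have := congrFun hAu (Fin.last n)
    simp at this
  have hct0 : c t0 = star uT ⬝ᵥ (npJ b 0 (n + 1) *ᵥ uT) := rfl
  have hq := quadJ_re_pos (b := b) uT huT_ne
  refine ⟨(c t0).re, by rw [hct0]; exact hq.1, ?_⟩
  have := Complex.reCLM.hasFDerivAt.comp_hasDerivAt (x := t0) hW
  exact this
end chunk5
/-- for `P_j(λ) = det(λ J_{[0,j-1]} - H_{[0,j-1]})`, the zeros of `Pₙ`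
and `P_{n+1}` are real; `-Pₙ(λ)/P_{n+1}(λ) = ((H_{[0,n]} - λJ_{[0,n]})⁻¹ eₙ, eₙ)`,
so `-ηₙ Pₙ/P_{n+1}` (with `ηₙ = det J_{[0,n]}/det J_{[0,n-1]}`) is an `R₀`-function;
consequently the zeros of `Pₙ` and `P_{n+1}` interlace strictly. -/
theorem pencil_char_polys_interlace
    (a1 b : ℕ → ℝ) (hb : ∀ j, 0 < b j)
    (z : ℕ → ℂ) (hz : ∀ j, 0 < (z j).im) (n : ℕ)
    (P : ℕ → ℂ → ℂ)
    (hP : ∀ (j : ℕ) (lam : ℂ), P j lam = (lam • npJ b 0 j - npH a1 b z 0 j).det)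
    (eta : ℂ) (heta : eta = (npJ b 0 (n + 1)).det / (npJ b 0 n).det) :
    (∀ lam : ℂ, (P n lam = 0 ∨ P (n + 1) lam = 0) → lam.im = 0) ∧
    (∀ lam : ℂ, lam.im ≠ 0 →
      -(P n lam) / P (n + 1) lam =
        (npH a1 b z 0 (n + 1) - lam • npJ b 0 (n + 1))⁻¹ (Fin.last n) (Fin.last n)) ∧
    (∀ lam : ℂ, lam.im ≠ 0 → 0 < (-(eta) * (P n lam / P (n + 1) lam)).im / lam.im) ∧
    (∀ x y : ℝ, x < y → P (n + 1) (x : ℂ) = 0 → P (n + 1) (y : ℂ) = 0 →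
      (∀ t ∈ Set.Ioo x y, P (n + 1) (t : ℂ) ≠ 0) →
      ∃! t : ℝ, t ∈ Set.Ioo x y ∧ P n (t : ℂ) = 0) := by
  refine ⟨?_, ?_, ?_, ?_⟩
  · -- (1) zeros are real
    rintro lam (h | h)
    · rw [hP n lam] at h
      exact pencil_zero_im h
    · rw [hP (n + 1) lam] at h
      exact pencil_zero_im h
  · -- (2) resolvent formula
    intro lam hlam
    have hdet : (lam • npJ b 0 (n + 1) - npH a1 b z 0 (n + 1)).det ≠ 0 :=
      pencil_det_ne_zero hlam
    rw [hP n lam, hP (n + 1) lam]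
    exact (inv_last_entry n lam hdet).symm
  · -- (3) Herglotz property
    intro lam hlam
    have hdet : (lam • npJ b 0 (n + 1) - npH a1 b z 0 (n + 1)).det ≠ 0 :=
      pencil_det_ne_zero hlam
    obtain ⟨g, hg, him⟩ := resolvent_im n lam hdet
    have h1 := inv_last_entry (a1 := a1) (b := b) (z := z) n lam hdet
    rw [← hP n, ← hP (n + 1)] at h1
    have hd1 := npJ_det_pos (b := b) (m := n + 1)
    have hd0 := npJ_det_pos (b := b) (m := n)
    have he1 : (npJ b 0 (n + 1)).det = ((npJ b 0 (n + 1)).det.re : ℂ) :=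
      Complex.ext rfl (by simp [hd1.2])
    have he0 : (npJ b 0 n).det = ((npJ b 0 n).det.re : ℂ) :=
      Complex.ext rfl (by simp [hd0.2])
    set r : ℝ := (npJ b 0 (n + 1)).det.re / (npJ b 0 n).det.re with hr
    have hrpos : 0 < r := div_pos hd1.1 hd0.1
    have hetar : eta = (r : ℂ) := by
      rw [heta, he1, he0, hr, Complex.ofReal_div]
    have hgoal : -eta * (P n lam / P (n + 1) lam) =
        (r : ℂ) * ((npH a1 b z 0 (n + 1) - lam • npJ b 0 (n + 1))⁻¹
          (Fin.last n) (Fin.last n)) := by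
      rw [hetar, h1]
      ring
    rw [hgoal]
    have himval : ((r : ℂ) * ((npH a1 b z 0 (n + 1) - lam • npJ b 0 (n + 1))⁻¹
        (Fin.last n) (Fin.last n))).im = r * (g * lam.im) := by
      rw [Complex.mul_im, Complex.ofReal_re, Complex.ofReal_im, zero_mul, add_zero, him]
    rw [himval, show r * (g * lam.im) = r * g * lam.im from by ring,
      mul_div_assoc, div_self hlam, mul_one]
    exact mul_pos hrpos hg
  · -- (4) interlacing
    intro x y hxy hPx hPy hbet
    set W : ℝ → ℂ := fun s =>
      (npH a1 b z 0 (n + 1) - (s : ℂ) • npJ b 0 (n + 1))⁻¹ (Fin.last n) (Fin.last n) with hWdef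
    set w : ℝ → ℝ := fun s => (W s).re with hwdef
    have hBdet : ∀ t ∈ Set.Ioo x y,
        ((t : ℂ) • npJ b 0 (n + 1) - npH a1 b z 0 (n + 1)).det ≠ 0 := by
      intro t ht
      rw [← hP (n + 1)]
      exact hbet t ht
    have hderiv : ∀ t ∈ Set.Ioo x y, ∃ g : ℝ, 0 < g ∧ HasDerivAt w g t :=
      fun t ht => W_hasDerivAt t (hBdet t ht)
    have hcont : ContinuousOn w (Set.Ioo x y) := by
      intro t ht
      obtain ⟨g, _, hd⟩ := hderiv t ht
      exact hd.continuousAt.continuousWithinAt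
    have hmono : StrictMonoOn w (Set.Ioo x y) := by
      apply strictMonoOn_of_deriv_pos (convex_Ioo x y) hcont
      intro t ht
      rw [interior_Ioo] at ht
      obtain ⟨g, hg, hd⟩ := hderiv t ht
      rw [hd.deriv]
      exact hg
    have hWP : ∀ t ∈ Set.Ioo x y, W t = -(P n (t : ℂ)) / P (n + 1) (t : ℂ) := by
      intro t ht
      have h1 := inv_last_entry (a1 := a1) (b := b) (z := z) n ((t : ℝ) : ℂ) (hBdet t ht)
      rw [← hP n, ← hP (n + 1)] at h1
      exact h1
    have hWreal : ∀ t ∈ Set.Ioo x y, W t = ((w t : ℝ) : ℂ) := by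
      intro t ht
      obtain ⟨g, hg, him⟩ := resolvent_im n ((t : ℝ) : ℂ) (hBdet t ht)
      apply Complex.ext
      · simp [hwdef]
      · rw [show ((npH a1 b z 0 (n + 1) - ((t : ℝ) : ℂ) • npJ b 0 (n + 1))⁻¹
            (Fin.last n) (Fin.last n)).im = g * (((t : ℝ) : ℂ)).im from him]
        simp
    have hPmul : ∀ t ∈ Set.Ioo x y, P n (t : ℂ) = (-(w t) : ℝ) * P (n + 1) (t : ℂ) := by
      intro t ht
      have h1 := hWP t ht
      rw [hWreal t ht] at h1
      have h2 : ((w t : ℝ) : ℂ) * P (n + 1) (t : ℂ) = -(P n (t : ℂ)) := by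
        rw [h1]
        exact div_mul_cancel₀ _ (hbet t ht)
      push_cast
      linear_combination h2
    have hPnx : P n ((x : ℝ) : ℂ) ≠ 0 := by
      intro hc
      refine no_common_zero (a1 := a1) hb hz n x ?_ ?_
      · rw [← hP]; exact hPx
      · rw [← hP]; exact hc
    have hPny : P n ((y : ℝ) : ℂ) ≠ 0 := by
      intro hc
      refine no_common_zero (a1 := a1) hb hz n y ?_ ?_
      · rw [← hP]; exact hPy
      · rw [← hP]; exact hc
    have hPcont : ∀ j, Continuous fun t : ℝ => P j (t : ℂ) := by
      intro j
      have hPeq : (fun t : ℝ => P j (t : ℂ)) =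
          fun t : ℝ => ((t : ℂ) • npJ b 0 j - npH a1 b z 0 j).det := by
        funext t
        exact hP j _
      rw [hPeq]
      apply Continuous.matrix_det
      apply continuous_matrix
      intro i k
      have : (fun t : ℝ => ((t : ℂ) • npJ b 0 j - npH a1 b z 0 j) i k) =
          fun t : ℝ => (t : ℂ) * npJ b 0 j i k - npH a1 b z 0 j i k := by
        funext t
        rw [Matrix.sub_apply, Matrix.smul_apply, smul_eq_mul]
      rw [this]
      exact (Complex.continuous_ofReal.mul continuous_const).sub continuous_const
    set m0 : ℝ := (x + y) / 2 with hm0def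
    have hxm0 : x < m0 := by rw [hm0def]; linarith
    have hm0y : m0 < y := by rw [hm0def]; linarith
    have hm0I : m0 ∈ Set.Ioo x y := ⟨hxm0, hm0y⟩
    set Bd : ℝ := |w m0| with hBd
    -- negative value near x
    have claim1 : ∃ t1 ∈ Set.Ioc x m0, w t1 < 0 := by
      by_contra hall
      push_neg at hall
      have hbound : ∀ t ∈ Set.Ioc x m0,
          ‖P n (t : ℂ)‖ ≤ Bd * ‖P (n + 1) (t : ℂ)‖ := by
        intro t ht
        have htI : t ∈ Set.Ioo x y := ⟨ht.1, lt_of_le_of_lt ht.2 hm0y⟩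
        rw [hPmul t htI, norm_mul, Complex.norm_real, Real.norm_eq_abs, abs_neg]
        have hle : |w t| ≤ Bd := by
          have hwt : w t ≤ w m0 := by
            rcases eq_or_lt_of_le ht.2 with he | hl
            · rw [he]
            · exact (hmono htI hm0I hl).le
          rw [_root_.abs_of_nonneg (hall t ht)]
          exact le_trans hwt (le_abs_self _)
        exact mul_le_mul_of_nonneg_right hle (norm_nonneg _)
      have hev : ∀ᶠ t in nhdsWithin x (Set.Ioi x), t ∈ Set.Ioc x m0 :=
        Ioc_mem_nhdsGT_of_mem ⟨le_refl x, hxm0⟩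
      have h1 : Filter.Tendsto (fun t : ℝ => ‖P n (t : ℂ)‖)
          (nhdsWithin x (Set.Ioi x)) (nhds (‖P n ((x : ℝ) : ℂ)‖)) :=
        ((continuous_norm.comp (hPcont n)).tendsto x).mono_left nhdsWithin_le_nhds
      have h2 : Filter.Tendsto (fun t : ℝ => Bd * ‖P (n + 1) (t : ℂ)‖)
          (nhdsWithin x (Set.Ioi x)) (nhds (Bd * ‖P (n + 1) ((x : ℝ) : ℂ)‖)) :=
        ((continuous_const.mul (continuous_norm.comp (hPcont (n + 1)))).tendsto
          x).mono_left nhdsWithin_le_nhds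
      rw [hPx, norm_zero, mul_zero] at h2
      have hle := le_of_tendsto_of_tendsto h1 h2 (by
        filter_upwards [hev] with t ht
        exact hbound t ht)
      have : ‖P n ((x : ℝ) : ℂ)‖ = 0 :=
        le_antisymm hle (norm_nonneg _)
      exact hPnx (norm_eq_zero.mp this)
    -- positive value near y
    have claim2 : ∃ t2 ∈ Set.Ico m0 y, 0 < w t2 := by
      by_contra hall
      push_neg at hall
      have hbound : ∀ t ∈ Set.Ico m0 y,
          ‖P n (t : ℂ)‖ ≤ Bd * ‖P (n + 1) (t : ℂ)‖ := by
        intro t ht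
        have htI : t ∈ Set.Ioo x y := ⟨lt_of_lt_of_le hxm0 ht.1, ht.2⟩
        rw [hPmul t htI, norm_mul, Complex.norm_real, Real.norm_eq_abs, abs_neg]
        have hle : |w t| ≤ Bd := by
          have hwt : w m0 ≤ w t := by
            rcases eq_or_lt_of_le ht.1 with he | hl
            · rw [← he]
            · exact (hmono hm0I htI hl).le
          rw [_root_.abs_of_nonpos (hall t ht)]
          calc -w t ≤ -w m0 := neg_le_neg hwt
            _ ≤ |w m0| := neg_le_abs _
        exact mul_le_mul_of_nonneg_right hle (norm_nonneg _)
      have hev : ∀ᶠ t in nhdsWithin y (Set.Iio y), t ∈ Set.Ico m0 y :=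
        Ico_mem_nhdsLT_of_mem ⟨hm0y, le_refl y⟩
      have h1 : Filter.Tendsto (fun t : ℝ => ‖P n (t : ℂ)‖)
          (nhdsWithin y (Set.Iio y)) (nhds (‖P n ((y : ℝ) : ℂ)‖)) :=
        ((continuous_norm.comp (hPcont n)).tendsto y).mono_left nhdsWithin_le_nhds
      have h2 : Filter.Tendsto (fun t : ℝ => Bd * ‖P (n + 1) (t : ℂ)‖)
          (nhdsWithin y (Set.Iio y)) (nhds (Bd * ‖P (n + 1) ((y : ℝ) : ℂ)‖)) :=
        ((continuous_const.mul (continuous_norm.comp (hPcont (n + 1)))).tendsto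
          y).mono_left nhdsWithin_le_nhds
      rw [hPy, norm_zero, mul_zero] at h2
      have hle := le_of_tendsto_of_tendsto h1 h2 (by
        filter_upwards [hev] with t ht
        exact hbound t ht)
      have : ‖P n ((y : ℝ) : ℂ)‖ = 0 :=
        le_antisymm hle (norm_nonneg _)
      exact hPny (norm_eq_zero.mp this)
    obtain ⟨t1, ht1mem, ht1w⟩ := claim1
    obtain ⟨t2, ht2mem, ht2w⟩ := claim2
    have ht1I : t1 ∈ Set.Ioo x y := ⟨ht1mem.1, lt_of_le_of_lt ht1mem.2 hm0y⟩
    have ht2I : t2 ∈ Set.Ioo x y := ⟨lt_of_lt_of_le hxm0 ht2mem.1, ht2mem.2⟩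
    have h12 : t1 < t2 := by
      rcases lt_or_ge t1 t2 with h | h
      · exact h
      · exfalso
        rcases eq_or_lt_of_le h with he | hl
        · rw [he] at ht2w; linarith
        · have := hmono ht2I ht1I hl
          linarith
    have hIccsub : Set.Icc t1 t2 ⊆ Set.Ioo x y := fun u hu =>
      ⟨lt_of_lt_of_le ht1I.1 hu.1, lt_of_le_of_lt hu.2 ht2I.2⟩
    have hivt := intermediate_value_Ioo h12.le (hcont.mono hIccsub)
    obtain ⟨t0, ht0mem, ht0w⟩ := hivt ⟨ht1w, ht2w⟩
    have ht0I : t0 ∈ Set.Ioo x y := hIccsub ⟨ht0mem.1.le, ht0mem.2.le⟩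
    have hPnt0 : P n ((t0 : ℝ) : ℂ) = 0 := by
      have h1 := hPmul t0 ht0I
      rw [ht0w] at h1
      simpa using h1
    refine ⟨t0, ⟨ht0I, hPnt0⟩, ?_⟩
    rintro t' ⟨ht'I, hPt'⟩
    have hwt' : w t' = 0 := by
      have h1 := hWP t' ht'I
      rw [hWreal t' ht'I, hPt', neg_zero, zero_div] at h1
      exact_mod_cast h1
    exact hmono.injOn ht'I ht0I (by rw [hwt', ht0w])
end
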